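/- arXiv:1603.03788 — 7 statements merged into one kernel-verified Lean document; each statement's English description precedes it below -/
import Mathlib

section
/- Let ψ : [a,b] → [a,b] be a continuously differentiable, non-decreasing surjection with ψ(a) = a and ψ(b) = b, and let X : [a,b] → ℝ^d be a continuously differentiable path. Denote by X̃ the reparametrized path X̃_t = X_{ψ(t)}. Then for every k ≥ 1 and every word (i₁,…,i_k) with letters in {1,…,d}, the iterated integrals coincide: S(X̃)^{i₁,…,i_k}_{a,b} = S(X)^{i₁,…,i_k}_{a,b}. -/
open MeasureTheory

/-- The `k`-fold iterated integral (signature coefficient) of a path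
`X : ℝ → (Fin d → ℝ)` over `[a,b]` along the word `w`, defined as the Lebesgue
integral of `∏ i, (X^{w i})'(t i)` over the simplex `a < t₁ < ⋯ < t_k < b`.
For the empty word (`k = 0`) this equals `1` by convention. -/
noncomputable def sigTerm {d : ℕ} (X : ℝ → Fin d → ℝ) (a b : ℝ) {k : ℕ}
    (w : Fin k → Fin d) : ℝ :=
  ∫ t in {t : Fin k → ℝ | StrictMono t ∧ ∀ i, t i ∈ Set.Ioo a b},
    ∏ i, deriv (fun s => X s (w i)) (t i)

open Set Filter Topology

/-- If `ψ` has derivative `c` at `x` and is `≥ ψ x` on a right neighbourhood, then `0 ≤ c`. -/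
private lemma aux_deriv_nonneg_right {ψ : ℝ → ℝ} {x z c : ℝ} (hxz : x < z)
    (hd : HasDerivAt ψ c x) (h : ∀ y ∈ Set.Ioo x z, ψ x ≤ ψ y) : 0 ≤ c := by
  have hslope : Tendsto (slope ψ x) (𝓝[>] x) (𝓝 c) :=
    (hasDerivWithinAt_iff_tendsto_slope' (notMem_Ioi.2 le_rfl)).1 hd.hasDerivWithinAt
  refine ge_of_tendsto hslope ?_
  filter_upwards [Ioo_mem_nhdsGT_of_mem ⟨le_rfl, hxz⟩] with y hy
  have h1 : 0 ≤ ψ y - ψ x := sub_nonneg.2 (h y hy)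
  have h2 : 0 < y - x := sub_pos.2 hy.1
  simpa [slope_def_field] using div_nonneg h1 h2.le

/-- If `ψ` has derivative `c` at `x` and is constant on a right neighbourhood, then `c = 0`. -/
private lemma aux_deriv_zero_right {ψ : ℝ → ℝ} {x z c : ℝ} (hxz : x < z)
    (hd : HasDerivAt ψ c x) (h : ∀ y ∈ Set.Ioo x z, ψ y = ψ x) : c = 0 := by
  have hslope : Tendsto (slope ψ x) (𝓝[>] x) (𝓝 c) :=
    (hasDerivWithinAt_iff_tendsto_slope' (notMem_Ioi.2 le_rfl)).1 hd.hasDerivWithinAt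
  have heq : slope ψ x =ᶠ[𝓝[>] x] fun _ => (0 : ℝ) := by
    filter_upwards [Ioo_mem_nhdsGT_of_mem ⟨le_rfl, hxz⟩] with y hy
    simp [slope_def_field, h y hy]
  exact tendsto_nhds_unique (hslope.congr' heq) tendsto_const_nhds

/-- If `ψ` has derivative `c` at `x` and is constant on a left neighbourhood, then `c = 0`. -/
private lemma aux_deriv_zero_left {ψ : ℝ → ℝ} {x z c : ℝ} (hzx : z < x)
    (hd : HasDerivAt ψ c x) (h : ∀ y ∈ Set.Ioo z x, ψ y = ψ x) : c = 0 := by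
  have hslope : Tendsto (slope ψ x) (𝓝[<] x) (𝓝 c) :=
    (hasDerivWithinAt_iff_tendsto_slope' (notMem_Iio.2 le_rfl)).1 hd.hasDerivWithinAt
  have heq : slope ψ x =ᶠ[𝓝[<] x] fun _ => (0 : ℝ) := by
    filter_upwards [Ioo_mem_nhdsLT_of_mem ⟨hzx, le_rfl⟩] with y hy
    simp [slope_def_field, h y hy]
  exact tendsto_nhds_unique (hslope.congr' heq) tendsto_const_nhds

/-- Invariance of the signature under time reparametrisation: if `ψ` is a C¹
non-decreasing surjection of `[a,b]` onto itself fixing the endpoints, then all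
iterated integrals of the reparametrised path `t ↦ X (ψ t)` coincide with those
of `X`. -/
theorem sigTerm_reparametrisation {d : ℕ} (a b : ℝ) (hab : a ≤ b)
    (ψ : ℝ → ℝ) (hψ : ContDiff ℝ 1 ψ) (hmono : MonotoneOn ψ (Set.Icc a b))
    (hsurj : Set.SurjOn ψ (Set.Icc a b) (Set.Icc a b))
    (hψa : ψ a = a) (hψb : ψ b = b)
    (X : ℝ → Fin d → ℝ) (hX : ContDiff ℝ 1 X)
    (k : ℕ) (hk : 1 ≤ k) (w : Fin k → Fin d) :
    sigTerm (fun t => X (ψ t)) a b w = sigTerm X a b w := by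
  classical
  rcases eq_or_lt_of_le hab with rfl | hlt
  · -- degenerate case `a = b`: the simplex is empty
    have hS : {t : Fin k → ℝ | StrictMono t ∧ ∀ i, t i ∈ Set.Ioo a a} = ∅ := by
      ext t
      simp only [Set.mem_setOf_eq, Set.mem_empty_iff_false, iff_false, not_and]
      intro _ h
      exact absurd (h ⟨0, hk⟩) (by simp)
    simp only [sigTerm, hS, Measure.restrict_empty, integral_zero_measure]
  -- basic differentiability facts
  have hψd : Differentiable ℝ ψ := hψ.differentiable one_ne_zero
  have hψc : Continuous (deriv ψ) := hψ.continuous_deriv le_rfl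
  have hfC : ∀ i : Fin k, ContDiff ℝ 1 (fun s => X s (w i)) := fun i =>
    (ContinuousLinearMap.proj (R := ℝ) (φ := fun _ : Fin d => ℝ) (w i)).contDiff.comp hX
  have hfd : ∀ i : Fin k, Differentiable ℝ (fun s => X s (w i)) := fun i =>
    (hfC i).differentiable one_ne_zero
  -- ψ' is nonnegative on (a, b)
  have hψ0 : ∀ x ∈ Set.Ioo a b, 0 ≤ deriv ψ x := by
    intro x hx
    refine aux_deriv_nonneg_right hx.2 (hψd x).hasDerivAt ?_
    intro y hy
    exact hmono ⟨hx.1.le, hx.2.le⟩ ⟨(hx.1.trans hy.1).le, hy.2.le⟩ hy.1.le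
  simp only [sigTerm]
  set S : Set (Fin k → ℝ) := {t | StrictMono t ∧ ∀ i, t i ∈ Set.Ioo a b} with hSdef
  set T : Set (Fin k → ℝ) := S ∩ {t | ∀ i, 0 < deriv ψ (t i)} with hTdef
  -- measurability
  have mS : MeasurableSet S := by
    have hrw : S = (⋂ p : Fin k × Fin k, {t : Fin k → ℝ | p.1 < p.2 → t p.1 < t p.2}) ∩
        ⋂ i, (fun t : Fin k → ℝ => t i) ⁻¹' Set.Ioo a b := by
      ext t
      simp only [hSdef, Set.mem_setOf_eq, Set.mem_inter_iff, Set.mem_iInter, Set.mem_preimage]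
      exact ⟨fun ⟨h1, h2⟩ => ⟨fun p hp => h1 hp, h2⟩,
        fun ⟨h1, h2⟩ => ⟨fun i j hij => h1 (i, j) hij, h2⟩⟩
    rw [hrw]
    refine (MeasurableSet.iInter fun p => ?_).inter (MeasurableSet.iInter fun i =>
      measurableSet_Ioo.preimage (measurable_pi_apply i))
    by_cases hp : p.1 < p.2
    · have : {t : Fin k → ℝ | p.1 < p.2 → t p.1 < t p.2} = {t | t p.1 < t p.2} := by
        ext t; simp [hp]
      rw [this]
      exact measurableSet_lt (measurable_pi_apply p.1) (measurable_pi_apply p.2)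
    · have : {t : Fin k → ℝ | p.1 < p.2 → t p.1 < t p.2} = Set.univ := by
        ext t; simp [hp]
      rw [this]; exact MeasurableSet.univ
  have mT : MeasurableSet T := by
    refine mS.inter ?_
    have : {t : Fin k → ℝ | ∀ i, 0 < deriv ψ (t i)} =
        ⋂ i, (fun t : Fin k → ℝ => deriv ψ (t i)) ⁻¹' Set.Ioi 0 := by
      ext t; simp
    rw [this]
    exact MeasurableSet.iInter fun i =>
      measurableSet_Ioi.preimage ((hψc.comp (continuous_apply i)).measurable)
  -- chain rule for the integrand
  have hchain : ∀ (i : Fin k) (u : ℝ),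
      deriv (fun s => X (ψ s) (w i)) u = deriv (fun s => X s (w i)) (ψ u) * deriv ψ u := by
    intro i u
    have hcomp : (fun s => X (ψ s) (w i)) = (fun s => X s (w i)) ∘ ψ := rfl
    rw [hcomp, deriv_comp (x := u) (hfd i (ψ u)) (hψd u)]
  have hfun1 : (fun t : Fin k → ℝ => ∏ i, deriv (fun s => X (ψ s) (w i)) (t i)) =
      fun t => ∏ i, deriv (fun s => X s (w i)) (ψ (t i)) * deriv ψ (t i) :=
    funext fun t => Finset.prod_congr rfl fun i _ => hchain i (t i)
  rw [hfun1]
  -- restrict the integral to `T`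
  have e2 : (∫ t in S, ∏ i, deriv (fun s => X s (w i)) (ψ (t i)) * deriv ψ (t i)) =
      ∫ t in T, ∏ i, deriv (fun s => X s (w i)) (ψ (t i)) * deriv ψ (t i) := by
    have h1 : (∫ t in S, ∏ i, deriv (fun s => X s (w i)) (ψ (t i)) * deriv ψ (t i)) =
        ∫ t in S, T.indicator
          (fun t => ∏ i, deriv (fun s => X s (w i)) (ψ (t i)) * deriv ψ (t i)) t := by
      refine setIntegral_congr_fun mS fun t ht => ?_
      by_cases htT : t ∈ T
      · rw [Set.indicator_of_mem htT]
      · rw [Set.indicator_of_notMem htT]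
        have : ∃ i, ¬ 0 < deriv ψ (t i) := by
          by_contra hcon
          push_neg at hcon
          exact htT ⟨ht, hcon⟩
        obtain ⟨i, hi⟩ := this
        have h0 : deriv ψ (t i) = 0 := le_antisymm (not_lt.1 hi) (hψ0 _ (ht.2 i))
        refine Finset.prod_eq_zero (Finset.mem_univ i) ?_
        rw [h0, mul_zero]
      -- done
    rw [h1, setIntegral_indicator mT, Set.inter_eq_self_of_subset_right Set.inter_subset_left]
  rw [e2]
  -- the change-of-variables map and its derivative
  have hΦd : ∀ x : Fin k → ℝ, HasFDerivAt (fun t (i : Fin k) => ψ (t i))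
      (ContinuousLinearMap.pi fun i => ((1 : ℝ →L[ℝ] ℝ).smulRight (deriv ψ (x i))).comp
        (ContinuousLinearMap.proj i)) x := by
    intro x
    refine hasFDerivAt_pi.2 fun i => ?_
    exact ((hψd (x i)).hasDerivAt.hasFDerivAt).comp x (hasFDerivAt_apply i x)
  have hdet : ∀ x : Fin k → ℝ,
      (ContinuousLinearMap.pi fun i => ((1 : ℝ →L[ℝ] ℝ).smulRight (deriv ψ (x i))).comp
        (ContinuousLinearMap.proj i) : (Fin k → ℝ) →L[ℝ] (Fin k → ℝ)).det =
      ∏ i, deriv ψ (x i) := by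
    intro x
    have hmat : LinearMap.toMatrix'
        ((ContinuousLinearMap.pi fun i => ((1 : ℝ →L[ℝ] ℝ).smulRight (deriv ψ (x i))).comp
          (ContinuousLinearMap.proj i) : (Fin k → ℝ) →L[ℝ] (Fin k → ℝ)) :
            (Fin k → ℝ) →ₗ[ℝ] (Fin k → ℝ)) = Matrix.diagonal fun i => deriv ψ (x i) := by
      ext i j
      by_cases h : i = j
      · subst h
        simp [LinearMap.toMatrix'_apply, Matrix.diagonal]
      · simp [LinearMap.toMatrix'_apply, Matrix.diagonal, h]
    rw [ContinuousLinearMap.det, ← LinearMap.det_toMatrix', hmat, Matrix.det_diagonal]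
  -- injectivity on T
  have hIcc : ∀ {x : ℝ}, x ∈ Set.Ioo a b → x ∈ Set.Icc a b := fun hx => ⟨hx.1.le, hx.2.le⟩
  have hinj : Set.InjOn (fun t (i : Fin k) => ψ (t i)) T := by
    rintro s ⟨⟨_, hsIoo⟩, hspos⟩ t ⟨⟨_, htIoo⟩, htpos⟩ heq
    funext i
    have hval : ψ (s i) = ψ (t i) := congrFun heq i
    by_contra hne
    rcases lt_or_gt_of_ne hne with h | h
    · have hconst : ∀ y ∈ Set.Ioo (s i) (t i), ψ y = ψ (s i) := by
        intro y hy
        have hyIcc : y ∈ Set.Icc a b := ⟨((hsIoo i).1.trans hy.1).le, (hy.2.trans (htIoo i).2).le⟩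
        exact le_antisymm (hval ▸ hmono hyIcc (hIcc (htIoo i)) hy.2.le)
          (hmono (hIcc (hsIoo i)) hyIcc hy.1.le)
      exact (hspos i).ne' (aux_deriv_zero_right h (hψd _).hasDerivAt hconst)
    · have hconst : ∀ y ∈ Set.Ioo (t i) (s i), ψ y = ψ (t i) := by
        intro y hy
        have hyIcc : y ∈ Set.Icc a b := ⟨((htIoo i).1.trans hy.1).le, (hy.2.trans (hsIoo i).2).le⟩
        exact le_antisymm (hval.symm ▸ hmono hyIcc (hIcc (hsIoo i)) hy.2.le)
          (hmono (hIcc (htIoo i)) hyIcc hy.1.le)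
      exact (htpos i).ne' (aux_deriv_zero_right h (hψd _).hasDerivAt hconst)
  -- change of variables
  have e3 := integral_image_eq_integral_abs_det_fderiv_smul (volume : Measure (Fin k → ℝ)) mT
    (fun x _ => (hΦd x).hasFDerivWithinAt) hinj
    (fun u => ∏ i, deriv (fun s => X s (w i)) (u i))
  have e3' : (∫ t in T, ∏ i, deriv (fun s => X s (w i)) (ψ (t i)) * deriv ψ (t i)) =
      ∫ u in (fun t (i : Fin k) => ψ (t i)) '' T, ∏ i, deriv (fun s => X s (w i)) (u i) := by
    rw [e3]
    refine setIntegral_congr_fun mT fun x hx => ?_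
    have hpos : 0 < ∏ i, deriv ψ (x i) := Finset.prod_pos fun i _ => hx.2 i
    rw [hdet x, abs_of_pos hpos, smul_eq_mul, ← Finset.prod_mul_distrib]
    exact Finset.prod_congr rfl fun i _ => by ring
  rw [e3']
  -- the image of T is almost all of S
  have hsub : (fun t (i : Fin k) => ψ (t i)) '' T ⊆ S := by
    rintro _ ⟨t, ⟨⟨hts, htIoo⟩, htpos⟩, rfl⟩
    constructor
    · intro i j hij
      have h1 : ∃ y ∈ Set.Ioo (t i) (t j), ψ (t i) < ψ y := by
        by_contra hcon
        push_neg at hcon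
        have hconst : ∀ y ∈ Set.Ioo (t i) (t j), ψ y = ψ (t i) := by
          intro y hy
          have hyIcc : y ∈ Set.Icc a b :=
            ⟨((htIoo i).1.trans hy.1).le, (hy.2.trans (htIoo j).2).le⟩
          exact le_antisymm (hcon y hy) (hmono (hIcc (htIoo i)) hyIcc hy.1.le)
        exact absurd (aux_deriv_zero_right (hts hij) (hψd _).hasDerivAt hconst) (htpos i).ne'
      obtain ⟨y, hy, hlty⟩ := h1
      have hyIcc : y ∈ Set.Icc a b := ⟨((htIoo i).1.trans hy.1).le, (hy.2.trans (htIoo j).2).le⟩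
      exact hlty.trans_le (hmono hyIcc (hIcc (htIoo j)) hy.2.le)
    · intro i
      constructor
      · have hle : a ≤ ψ (t i) := by
          rw [← hψa]
          exact hmono ⟨le_rfl, hab⟩ (hIcc (htIoo i)) (htIoo i).1.le
        rcases eq_or_lt_of_le hle with heq | h
        · exfalso
          have hconst : ∀ y ∈ Set.Ioo a (t i), ψ y = ψ (t i) := by
            intro y hy
            have hyIcc : y ∈ Set.Icc a b := ⟨hy.1.le, (hy.2.trans (htIoo i).2).le⟩
            refine le_antisymm (hmono hyIcc (hIcc (htIoo i)) hy.2.le) ?_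
            rw [← heq, ← hψa]
            exact hmono ⟨le_rfl, hab⟩ hyIcc hy.1.le
          exact (htpos i).ne'
            (aux_deriv_zero_left (htIoo i).1 (hψd _).hasDerivAt hconst)
        · exact h
      · have hle : ψ (t i) ≤ b := by
          rw [← hψb]
          exact hmono (hIcc (htIoo i)) ⟨hab, le_rfl⟩ (htIoo i).2.le
        rcases eq_or_lt_of_le hle with heq | h
        · exfalso
          have hconst : ∀ y ∈ Set.Ioo (t i) b, ψ y = ψ (t i) := by
            intro y hy
            have hyIcc : y ∈ Set.Icc a b := ⟨((htIoo i).1.trans hy.1).le, hy.2.le⟩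
            refine le_antisymm ?_ (hmono (hIcc (htIoo i)) hyIcc hy.1.le)
            rw [heq, ← hψb]
            exact hmono hyIcc ⟨hab, le_rfl⟩ hy.2.le
          exact (htpos i).ne'
            (aux_deriv_zero_right (htIoo i).2 (hψd _).hasDerivAt hconst)
        · exact h
  -- the complement of the image in S is null (Sard)
  have hZc : IsCompact ({x : ℝ | deriv ψ x = 0} ∩ Set.Icc a b) :=
    isCompact_Icc.inter_left (isClosed_singleton.preimage hψc)
  have hN0 : volume (ψ '' ({x : ℝ | deriv ψ x = 0} ∩ Set.Icc a b)) = 0 := by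
    refine addHaar_image_eq_zero_of_det_fderivWithin_eq_zero (volume : Measure ℝ)
      (f' := fun x => (1 : ℝ →L[ℝ] ℝ).smulRight (deriv ψ x))
      (fun x _ => (hψd x).hasDerivAt.hasFDerivAt.hasFDerivWithinAt) ?_
    intro x hx
    rw [ContinuousLinearMap.smulRight_one_eq_toSpanSingleton, ContinuousLinearMap.det_toSpanSingleton]
    exact hx.1
  have hslab : ∀ i : Fin k,
      volume ((fun t : Fin k → ℝ => t i) ⁻¹' (ψ '' ({x : ℝ | deriv ψ x = 0} ∩ Set.Icc a b)))
        = 0 := by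
    intro i
    set N := ψ '' ({x : ℝ | deriv ψ x = 0} ∩ Set.Icc a b) with hNdef
    have hrw : (fun t : Fin k → ℝ => t i) ⁻¹' N =
        Set.pi Set.univ (Function.update (fun _ : Fin k => (Set.univ : Set ℝ)) i N) := by
      ext t
      simp only [Set.mem_preimage, Set.mem_univ_pi]
      constructor
      · intro h j
        rcases eq_or_ne j i with rfl | hj
        · simpa using h
        · simp [Function.update_of_ne hj]
      · intro h
        simpa using h i
    rw [hrw, volume_pi_pi]
    exact Finset.prod_eq_zero (Finset.mem_univ i) (by simp [hN0])
  have hnull : volume (S \ (fun t (i : Fin k) => ψ (t i)) '' T) = 0 := by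
    refine measure_mono_null ?_ (measure_iUnion_null hslab)
    rintro u ⟨huS, huT⟩
    by_contra hcon
    simp only [Set.mem_iUnion, Set.mem_preimage, not_exists] at hcon
    apply huT
    have hsel : ∀ i : Fin k, ∃ x ∈ Set.Icc a b, ψ x = u i := fun i =>
      hsurj ⟨(huS.2 i).1.le, (huS.2 i).2.le⟩
    choose t htmem htval using hsel
    have htIoo : ∀ i, t i ∈ Set.Ioo a b := by
      intro i
      rcases eq_or_lt_of_le (htmem i).1 with h | h
      · exfalso
        have : u i = a := by rw [← htval i, ← h, hψa]
        exact (huS.2 i).1.ne' this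
      rcases eq_or_lt_of_le (htmem i).2 with h' | h'
      · exfalso
        have : u i = b := by rw [← htval i, h', hψb]
        exact (huS.2 i).2.ne this
      exact ⟨h, h'⟩
    have htpos : ∀ i, 0 < deriv ψ (t i) := by
      intro i
      have hne : deriv ψ (t i) ≠ 0 := fun h0 => hcon i ⟨t i, ⟨h0, htmem i⟩, htval i⟩
      exact lt_of_le_of_ne (hψ0 _ (htIoo i)) (Ne.symm hne)
    have hts : StrictMono t := by
      intro i j hij
      by_contra hle
      push_neg at hle
      have : u j ≤ u i := by
        rw [← htval i, ← htval j]
        exact hmono (htmem j) (htmem i) hle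
      exact absurd (huS.1 hij) (not_lt.2 this)
    exact ⟨t, ⟨⟨hts, htIoo⟩, htpos⟩, funext htval⟩
  have haeeq : (fun t (i : Fin k) => ψ (t i)) '' T =ᵐ[volume] S := by
    rw [ae_eq_set]
    constructor
    · rw [Set.diff_eq_empty.2 hsub]; exact measure_empty
    · exact hnull
  exact setIntegral_congr_set haeeq
end

section
/- (Shuffle product identity, Ree) Let X : [a,b] → ℝ^d be a continuously differentiable path and let I = (i₁,…,i_k) and J = (j₁,…,j_m) be words with letters in {1,…,d}. Write (r₁,…,r_{k+m}) = (i₁,…,i_k,j₁,…,j_m) for their concatenation. Call a permutation σ of {1,…,k+m} a (k,m)-shuffle if σ⁻¹(1) < ⋯ < σ⁻¹(k) and σ⁻¹(k+1) < ⋯ < σ⁻¹(k+m). Then S(X)^I_{a,b} · S(X)^J_{a,b} = Σ_{σ ∈ Shuffles(k,m)} S(X)^{(r_{σ(1)},…,r_{σ(k+m)})}_{a,b}, where the sum runs over all (k,m)-shuffles σ. -/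
open MeasureTheory

/-- A permutation `σ` of `{1,…,k+m}` is a `(k,m)`-shuffle if
`σ⁻¹(1) < ⋯ < σ⁻¹(k)` and `σ⁻¹(k+1) < ⋯ < σ⁻¹(k+m)`. -/
def IsShuffle (k m : ℕ) (σ : Equiv.Perm (Fin (k + m))) : Prop :=
  StrictMono (fun i : Fin k => σ⁻¹ (Fin.castAdd m i)) ∧
  StrictMono (fun j : Fin m => σ⁻¹ (Fin.natAdd k j))

namespace SigShuffleAux

/-- The set of tuples that are strictly monotone along a given index map is measurable. -/
lemma measurableSet_strictMonoSet {n r : ℕ} (e : Fin r → Fin n) :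
    MeasurableSet {u : Fin n → ℝ | StrictMono fun i => u (e i)} := by
  have h : {u : Fin n → ℝ | StrictMono fun i => u (e i)} =
      ⋂ (i : Fin r) (j : Fin r) (_ : i < j), {u : Fin n → ℝ | u (e i) < u (e j)} := by
    ext u
    simp only [Set.mem_setOf_eq, Set.mem_iInter]
    exact ⟨fun h i j hij => h hij, fun h a b hab => h a b hab⟩
  rw [h]
  exact MeasurableSet.iInter fun i => MeasurableSet.iInter fun j =>
    MeasurableSet.iInter fun _ =>
      measurableSet_lt (measurable_pi_apply _) (measurable_pi_apply _)

lemma measurableSet_box {n : ℕ} (a b : ℝ) :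
    MeasurableSet {u : Fin n → ℝ | ∀ i, u i ∈ Set.Ioo a b} := by
  have h : {u : Fin n → ℝ | ∀ i, u i ∈ Set.Ioo a b}
      = ⋂ i, (fun u : Fin n → ℝ => u i) ⁻¹' Set.Ioo a b := by
    ext u; simp
  rw [h]
  exact MeasurableSet.iInter fun i => (measurable_pi_apply i) measurableSet_Ioo

lemma continuous_prodDeriv {d n : ℕ} {X : ℝ → Fin d → ℝ} (hX : ContDiff ℝ 1 X)
    (w : Fin n → Fin d) :
    Continuous fun u : Fin n → ℝ => ∏ i, deriv (fun s => X s (w i)) (u i) := by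
  apply continuous_finset_prod
  intro i _
  have h1 : ContDiff ℝ 1 fun s => X s (w i) :=
    (ContinuousLinearMap.proj (R := ℝ) (φ := fun _ : Fin d => ℝ) (w i)).contDiff.comp hX
  exact (h1.continuous_deriv le_rfl).comp (continuous_apply i)

lemma integrableOn_prodDeriv {d n : ℕ} {X : ℝ → Fin d → ℝ} (hX : ContDiff ℝ 1 X)
    (w : Fin n → Fin d) (a b : ℝ) {S : Set (Fin n → ℝ)}
    (hS : S ⊆ {u : Fin n → ℝ | ∀ i, u i ∈ Set.Ioo a b}) :
    IntegrableOn (fun u : Fin n → ℝ => ∏ i, deriv (fun s => X s (w i)) (u i)) S := by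
  have hbox : IntegrableOn (fun u : Fin n → ℝ => ∏ i, deriv (fun s => X s (w i)) (u i))
      (Set.pi Set.univ fun _ : Fin n => Set.Icc a b) :=
    ((continuous_prodDeriv hX w).continuousOn).integrableOn_compact
      (isCompact_univ_pi fun _ => isCompact_Icc)
  refine hbox.mono_set fun u hu => ?_
  intro i _
  exact Set.Ioo_subset_Icc_self (hS hu i)

lemma ae_injective (n : ℕ) : ∀ᵐ u : Fin n → ℝ, Function.Injective u := by
  have h0 : ∀ i j : Fin n, i ≠ j → volume {u : Fin n → ℝ | u i = u j} = 0 := by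
    intro i j hij
    set L : (Fin n → ℝ) →ₗ[ℝ] ℝ := LinearMap.proj (R := ℝ) (φ := fun _ : Fin n => ℝ) i - LinearMap.proj (R := ℝ) (φ := fun _ : Fin n => ℝ) j with hL
    have hset : {u : Fin n → ℝ | u i = u j} = (LinearMap.ker L : Set (Fin n → ℝ)) := by
      ext u
      simp [hL, LinearMap.mem_ker, sub_eq_zero]
    rw [hset]
    apply MeasureTheory.Measure.addHaar_submodule
    intro htop
    have hmem : Pi.single i (1 : ℝ) ∈ LinearMap.ker L := htop ▸ Submodule.mem_top
    rw [LinearMap.mem_ker, hL] at hmem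
    simp only [LinearMap.sub_apply, LinearMap.proj_apply] at hmem
    rw [Pi.single_eq_same, Pi.single_eq_of_ne (Ne.symm hij)] at hmem
    norm_num at hmem
  rw [ae_iff]
  refine measure_mono_null (fun u hu => ?_)
    (measure_iUnion_null (s := fun p : Fin n × Fin n =>
      ⋃ _ : p.1 ≠ p.2, {u : Fin n → ℝ | u p.1 = u p.2}) fun p => ?_)
  · simp only [Set.mem_setOf_eq, Function.Injective, not_forall] at hu
    obtain ⟨i, j, hij, hne⟩ := hu
    exact Set.mem_iUnion.2 ⟨(i, j), Set.mem_iUnion.2 ⟨hne, hij⟩⟩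
  · by_cases h : p.1 = p.2
    · simp [h]
    · simpa [h] using h0 p.1 p.2 h

lemma sort_strictMono {n : ℕ} {u : Fin n → ℝ} (hu : Function.Injective u) :
    StrictMono fun i => u (Tuple.sort u i) := by
  have : Monotone (u ∘ Tuple.sort u) := Tuple.monotone_sort u
  exact this.strictMono_of_injective (hu.comp (Tuple.sort u).injective)

lemma sort_unique {n : ℕ} {u : Fin n → ℝ} (hu : Function.Injective u)
    {σ τ : Equiv.Perm (Fin n)} (hσ : StrictMono fun i => u (σ i))
    (hτ : StrictMono fun i => u (τ i)) : σ = τ := by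
  have h1 : ∀ ρ : Equiv.Perm (Fin n), Set.range (fun i => u (ρ i)) = Set.range u := by
    intro ρ
    rw [show (fun i => u (ρ i)) = u ∘ ρ from rfl, Set.range_comp, Equiv.range_eq_univ,
      Set.image_univ]
  haveI : WellFoundedLT (Fin n) := inferInstance
  have h2 : (fun i => u (σ i)) = fun i => u (τ i) :=
    (StrictMono.range_inj hσ hτ).1 (by rw [h1, h1])
  exact Equiv.ext fun i => hu (congrFun h2 i)

lemma isShuffle_of_sorted {k m : ℕ} {u : Fin (k + m) → ℝ}
    (h1 : StrictMono fun i : Fin k => u (Fin.castAdd m i))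
    (h2 : StrictMono fun j : Fin m => u (Fin.natAdd k j))
    {σ : Equiv.Perm (Fin (k + m))} (hσ : StrictMono fun i => u (σ i)) :
    IsShuffle k m σ := by
  constructor
  · intro i j hij
    have h := h1 hij
    rw [← hσ.lt_iff_lt]
    simpa [Equiv.apply_symm_apply] using h
  · intro i j hij
    have h := h2 hij
    rw [← hσ.lt_iff_lt]
    simpa [Equiv.apply_symm_apply] using h

lemma sorted_of_isShuffle {k m : ℕ} {u : Fin (k + m) → ℝ}
    {σ : Equiv.Perm (Fin (k + m))} (hsh : IsShuffle k m σ)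
    (hσ : StrictMono fun i => u (σ i)) :
    (StrictMono fun i : Fin k => u (Fin.castAdd m i)) ∧
      (StrictMono fun j : Fin m => u (Fin.natAdd k j)) := by
  constructor
  · have h := hσ.comp hsh.1
    simpa [Function.comp_def, Equiv.apply_symm_apply] using h
  · have h := hσ.comp hsh.2
    simpa [Function.comp_def, Equiv.apply_symm_apply] using h

end SigShuffleAux

open SigShuffleAux

open scoped Classical in
/-- Shuffle product identity (Ree): the product of the iterated integrals along
two words `I` and `J` is the sum, over all `(k,m)`-shuffles `σ`, of the iterated
integral along the shuffled concatenation `(r_{σ(1)},…,r_{σ(k+m)})` where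
`r = I ++ J`. -/
theorem sigTerm_shuffle {d : ℕ} (a b : ℝ) (hab : a ≤ b)
    (X : ℝ → Fin d → ℝ) (hX : ContDiff ℝ 1 X)
    (k m : ℕ) (I : Fin k → Fin d) (J : Fin m → Fin d) :
    sigTerm X a b I * sigTerm X a b J =
      ∑ σ : Equiv.Perm (Fin (k + m)),
        if IsShuffle k m σ then
          sigTerm X a b (fun i => Fin.append I J (σ i))
        else 0 := by
  set w : Fin (k + m) → Fin d := Fin.append I J with hw
  set f : (Fin (k + m) → ℝ) → ℝ := fun u => ∏ i, deriv (fun s => X s (w i)) (u i) with hf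
  set A : Set (Fin k → ℝ) := {t | StrictMono t ∧ ∀ i, t i ∈ Set.Ioo a b} with hA
  set B : Set (Fin m → ℝ) := {t | StrictMono t ∧ ∀ i, t i ∈ Set.Ioo a b} with hB
  set C : Set (Fin (k + m) → ℝ) :=
    {u | (StrictMono fun i : Fin k => u (Fin.castAdd m i)) ∧
      (StrictMono fun j : Fin m => u (Fin.natAdd k j)) ∧ ∀ i, u i ∈ Set.Ioo a b} with hC
  set S : Equiv.Perm (Fin (k + m)) → Set (Fin (k + m) → ℝ) :=
    fun σ => {u | (StrictMono fun i => u (σ i)) ∧ ∀ i, u i ∈ Set.Ioo a b} with hS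
  -- Step 1 : the product is an integral over C
  have step1 : sigTerm X a b I * sigTerm X a b J = ∫ u in C, f u := by
    set e1 : ((Fin k ⊕ Fin m) → ℝ) ≃ᵐ (Fin (k + m) → ℝ) :=
      MeasurableEquiv.piCongrLeft (fun _ => ℝ) finSumFinEquiv with he1
    set e2 : ((Fin k ⊕ Fin m) → ℝ) ≃ᵐ ((Fin k → ℝ) × (Fin m → ℝ)) :=
      MeasurableEquiv.sumPiEquivProdPi (fun _ => ℝ) with he2
    set Φ := e1.symm.trans e2 with hPhi
    have h1 : MeasurePreserving e1.symm volume volume :=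
      (volume_measurePreserving_piCongrLeft (fun _ : Fin (k + m) => ℝ) finSumFinEquiv).symm e1
    have h2 : MeasurePreserving e2 volume volume := by
      have h := (volume_measurePreserving_sumPiEquivProdPi_symm
        (fun _ : Fin k ⊕ Fin m => ℝ)).symm e2.symm
      rwa [MeasurableEquiv.symm_symm] at h
    have hmp : MeasurePreserving Φ volume (volume.prod volume) := by
      rw [← Measure.volume_eq_prod]
      exact h2.comp h1
    have hPhiApp : ∀ u : Fin (k + m) → ℝ,
        Φ u = (fun i => u (Fin.castAdd m i), fun j => u (Fin.natAdd k j)) := by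
      intro u
      show e2 (e1.symm u) = _
      have he1s : e1.symm u = fun x : Fin k ⊕ Fin m => u (finSumFinEquiv x) := by
        funext x
        show (Equiv.piCongrLeft (fun _ => ℝ) finSumFinEquiv).symm u x = _
        rw [Equiv.piCongrLeft_symm_apply]
      rw [he1s]
      show (Equiv.sumPiEquivProdPi fun _ => ℝ) _ = _
      refine Prod.ext ?_ ?_ <;> funext i <;>
        simp [Equiv.sumPiEquivProdPi]
    have hsplit : ∀ u : Fin (k + m) → ℝ, f u
        = (∏ i, deriv (fun s => X s (I i)) (u (Fin.castAdd m i))) *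
          ∏ j, deriv (fun s => X s (J j)) (u (Fin.natAdd k j)) := by
      intro u
      show (∏ i : Fin (k + m), deriv (fun s => X s (w i)) (u i)) = _
      rw [← Equiv.prod_comp finSumFinEquiv
        (fun i : Fin (k + m) => deriv (fun s => X s (w i)) (u i))]
      rw [Fintype.prod_sum_type]
      congr 1
      · exact Finset.prod_congr rfl fun i _ => by simp [hw, Fin.append_left]
      · exact Finset.prod_congr rfl fun j _ => by simp [hw, Fin.append_right]
    have hmul : sigTerm X a b I * sigTerm X a b J
        = ∫ z in A ×ˢ B, (∏ i, deriv (fun s => X s (I i)) (z.1 i)) *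
            ∏ j, deriv (fun s => X s (J j)) (z.2 j) ∂(volume.prod volume) := by
      rw [sigTerm, sigTerm, ← hA, ← hB, ← Measure.prod_restrict]
      exact (integral_prod_mul (μ := volume.restrict A) (ν := volume.restrict B)
        (fun t => ∏ i, deriv (fun s => X s (I i)) (t i))
        (fun t => ∏ j, deriv (fun s => X s (J j)) (t j))).symm
    rw [hmul, ← hmp.setIntegral_preimage_emb Φ.measurableEmbedding
      (fun z : (Fin k → ℝ) × (Fin m → ℝ) => (∏ i, deriv (fun s => X s (I i)) (z.1 i)) *
        ∏ j, deriv (fun s => X s (J j)) (z.2 j)) (A ×ˢ B)]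
    have hpre : Φ ⁻¹' (A ×ˢ B) = C := by
      ext u
      rw [Set.mem_preimage, hPhiApp u, Set.mem_prod]
      simp only [hA, hB, hC, Set.mem_setOf_eq]
      constructor
      · rintro ⟨⟨p1, p2⟩, ⟨q1, q2⟩⟩
        exact ⟨p1, q1, fun i => Fin.addCases p2 q2 i⟩
      · rintro ⟨p1, q1, h⟩
        exact ⟨⟨p1, fun i => h _⟩, ⟨q1, fun j => h _⟩⟩
    rw [hpre]
    refine integral_congr_ae (Filter.Eventually.of_forall fun u => ?_)
    show (fun z : (Fin k → ℝ) × (Fin m → ℝ) => (∏ i, deriv (fun s => X s (I i)) (z.1 i)) *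
        ∏ j, deriv (fun s => X s (J j)) (z.2 j)) (Φ u) = f u
    rw [hPhiApp u]
    exact (hsplit u).symm
  -- Step 3 : each shuffled iterated integral is an integral over S σ
  have step3 : ∀ σ : Equiv.Perm (Fin (k + m)),
      sigTerm X a b (fun i => w (σ i)) = ∫ u in S σ, f u := by
    intro σ
    set E : (Fin (k + m) → ℝ) ≃ᵐ (Fin (k + m) → ℝ) :=
      (MeasurableEquiv.piCongrLeft (fun _ : Fin (k + m) => ℝ)
        (σ : Fin (k + m) ≃ Fin (k + m))).symm with hE
    have hEmp : MeasurePreserving E volume volume :=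
      (volume_measurePreserving_piCongrLeft (fun _ : Fin (k + m) => ℝ)
        (σ : Fin (k + m) ≃ Fin (k + m))).symm _
    have hEapp : ∀ u : Fin (k + m) → ℝ, E u = fun i => u (σ i) := by
      intro u
      funext i
      show (Equiv.piCongrLeft (fun _ : Fin (k + m) => ℝ)
        (σ : Fin (k + m) ≃ Fin (k + m))).symm u i = _
      rw [Equiv.piCongrLeft_symm_apply]
    rw [sigTerm]
    rw [← hEmp.setIntegral_preimage_emb E.measurableEmbedding
      (fun t => ∏ i, deriv (fun s => X s (w (σ i))) (t i))
      {t : Fin (k + m) → ℝ | StrictMono t ∧ ∀ i, t i ∈ Set.Ioo a b}]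
    have hset : E ⁻¹' {t : Fin (k + m) → ℝ | StrictMono t ∧ ∀ i, t i ∈ Set.Ioo a b} = S σ := by
      ext u
      rw [Set.mem_preimage]
      simp only [Set.mem_setOf_eq, hEapp u, hS]
      constructor
      · rintro ⟨h1, h2⟩
        refine ⟨h1, fun i => ?_⟩
        simpa using h2 (σ.symm i)
      · rintro ⟨h1, h2⟩
        exact ⟨h1, fun i => h2 (σ i)⟩
    rw [hset]
    refine integral_congr_ae (Filter.Eventually.of_forall fun u => ?_)
    show (∏ i, deriv (fun s => X s (w (σ i))) (E u i)) = f u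
    rw [hEapp u]
    exact Equiv.prod_comp σ fun j => deriv (fun s => X s (w j)) (u j)
  -- Step 2 : decomposition of C into the S σ
  have meas_S : ∀ σ : Equiv.Perm (Fin (k + m)), MeasurableSet (S σ) := by
    intro σ
    have h : S σ = {u : Fin (k + m) → ℝ | StrictMono fun i => u (σ i)} ∩
        {u | ∀ i, u i ∈ Set.Ioo a b} := rfl
    rw [h]
    exact (measurableSet_strictMonoSet (fun i => σ i)).inter (measurableSet_box a b)
  have meas_C : MeasurableSet C := by
    have h : C = {u : Fin (k + m) → ℝ | StrictMono fun i : Fin k => u (Fin.castAdd m i)} ∩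
        ({u | StrictMono fun j : Fin m => u (Fin.natAdd k j)} ∩
          {u | ∀ i, u i ∈ Set.Ioo a b}) := rfl
    rw [h]
    exact (measurableSet_strictMonoSet _).inter
      ((measurableSet_strictMonoSet _).inter (measurableSet_box a b))
  have int_S : ∀ σ : Equiv.Perm (Fin (k + m)), IntegrableOn f (S σ) := fun σ =>
    integrableOn_prodDeriv hX w a b (fun u hu => hu.2)
  have step2 : ∫ u in C, f u
      = ∑ σ : Equiv.Perm (Fin (k + m)),
          if IsShuffle k m σ then ∫ u in S σ, f u else 0 := by
    have key : ∀ᵐ u : Fin (k + m) → ℝ, Set.indicator C f u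
        = ∑ σ : Equiv.Perm (Fin (k + m)),
            if IsShuffle k m σ then Set.indicator (S σ) f u else 0 := by
      filter_upwards [ae_injective (k + m)] with u hu
      by_cases hCu : u ∈ C
      · rw [Set.indicator_of_mem hCu f]
        have hsm : StrictMono fun i => u (Tuple.sort u i) := sort_strictMono hu
        have hsh : IsShuffle k m (Tuple.sort u) := isShuffle_of_sorted hCu.1 hCu.2.1 hsm
        have hmemS : u ∈ S (Tuple.sort u) := ⟨hsm, hCu.2.2⟩
        rw [Finset.sum_eq_single (Tuple.sort u)]
        · rw [if_pos hsh, Set.indicator_of_mem hmemS]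
        · intro σ _ hne
          split_ifs with h
          · exact Set.indicator_of_notMem (fun hmem => hne (sort_unique hu hmem.1 hsm)) f
          · rfl
        · intro h; exact absurd (Finset.mem_univ _) h
      · rw [Set.indicator_of_notMem hCu f]
        refine (Finset.sum_eq_zero fun σ _ => ?_).symm
        split_ifs with h
        · refine Set.indicator_of_notMem (fun hmem => hCu ?_) f
          obtain ⟨c1, c2⟩ := sorted_of_isShuffle h hmem.1
          exact ⟨c1, c2, hmem.2⟩
        · rfl
    calc ∫ u in C, f u = ∫ u, Set.indicator C f u := (integral_indicator meas_C).symm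
      _ = ∫ u, ∑ σ : Equiv.Perm (Fin (k + m)),
            if IsShuffle k m σ then Set.indicator (S σ) f u else 0 := integral_congr_ae key
      _ = ∑ σ : Equiv.Perm (Fin (k + m)),
            ∫ u, if IsShuffle k m σ then Set.indicator (S σ) f u else 0 := by
          refine integral_finset_sum _ fun σ _ => ?_
          by_cases h : IsShuffle k m σ
          · simp only [if_pos h]
            exact (integrable_indicator_iff (meas_S σ)).2 (int_S σ)
          · simp only [if_neg h]
            exact integrable_zero _ _ _
      _ = ∑ σ : Equiv.Perm (Fin (k + m)),
            if IsShuffle k m σ then ∫ u in S σ, f u else 0 := by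
          refine Finset.sum_congr rfl fun σ _ => ?_
          by_cases h : IsShuffle k m σ
          · simp only [if_pos h]
            exact integral_indicator (meas_S σ)
          · simp [if_neg h]
  rw [step1, step2]
  refine Finset.sum_congr rfl fun σ _ => ?_
  split_ifs with h
  · exact (step3 σ).symm
  · rfl
end

section
/- Let X : [a,b] → ℝ^d be a continuously differentiable path. For any indices i, j ∈ {1,…,d}, the shuffle product identity in the case of the words (i,j) and (i) reads: S(X)^{i,j}_{a,b} · S(X)^i_{a,b} = 2·S(X)^{i,i,j}_{a,b} + S(X)^{i,j,i}_{a,b}. -/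
open MeasureTheory

lemma strictMono_snoc_iff {k : ℕ} (y : Fin k → ℝ) (x : ℝ) :
    StrictMono (Fin.snoc y x : Fin (k+1) → ℝ) ↔ StrictMono y ∧ ∀ j, y j < x := by
  constructor
  · intro h
    refine ⟨fun j1 j2 hlt => ?_, fun j => ?_⟩
    · have := h (show (j1.castSucc : Fin (k+1)) < j2.castSucc from
        (Fin.castSucc_lt_castSucc_iff).2 hlt)
      simpa using this
    · have := h (Fin.castSucc_lt_last j)
      simpa using this
  · rintro ⟨hy, hx⟩ m1 m2 hlt
    rcases Fin.eq_castSucc_or_eq_last m2 with ⟨j2, rfl⟩ | rfl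
    · rcases Fin.eq_castSucc_or_eq_last m1 with ⟨j1, rfl⟩ | rfl
      · simpa using hy ((Fin.castSucc_lt_castSucc_iff).1 hlt)
      · exact absurd hlt (by simpa using (Fin.le_last j2.castSucc).not_gt)
    · rcases Fin.eq_castSucc_or_eq_last m1 with ⟨j1, rfl⟩ | rfl
      · simpa using hx j1
      · exact absurd hlt (lt_irrefl _)

lemma measurableSet_simplex {k : ℕ} (a b : ℝ) :
    MeasurableSet {t : Fin k → ℝ | StrictMono t ∧ ∀ i, t i ∈ Set.Ioo a b} := by
  rw [Set.setOf_and]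
  apply MeasurableSet.inter
  · have h : {t : Fin k → ℝ | StrictMono t}
        = ⋂ p : Fin k × Fin k, {t | p.1 < p.2 → t p.1 < t p.2} := by
      ext t
      simp only [Set.mem_setOf_eq, Set.mem_iInter, Prod.forall, StrictMono]
    rw [h]
    refine MeasurableSet.iInter fun p => ?_
    by_cases hp : p.1 < p.2
    · simp only [hp, forall_true_left]
      exact measurableSet_lt (measurable_pi_apply _) (measurable_pi_apply _)
    · simp [hp]
  · rw [Set.setOf_forall]
    exact MeasurableSet.iInter fun m =>
      measurableSet_preimage (measurable_pi_apply m) measurableSet_Ioo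


lemma sigTerm_nil {d : ℕ} (X : ℝ → Fin d → ℝ) (a b : ℝ) (w : Fin 0 → Fin d) :
    sigTerm X a b w = 1 := by
  rw [sigTerm]
  have h1 : {t : Fin 0 → ℝ | StrictMono t ∧ ∀ i, t i ∈ Set.Ioo a b} = Set.univ := by
    ext t
    simp [StrictMono]
  rw [h1, Measure.restrict_univ]
  have : (volume : Measure (Fin 0 → ℝ)) Set.univ = 1 := by
    rw [volume_pi, Measure.pi_univ]; simp
  simp [integral_const, measureReal_def, this]

lemma sigTerm_succ {d : ℕ} (X : ℝ → Fin d → ℝ)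
    (hd : ∀ m : Fin d, Continuous (deriv fun s => X s m))
    (a b : ℝ) {k : ℕ} (w : Fin (k + 1) → Fin d) :
    sigTerm X a b w = ∫ u in Set.Ioo a b,
      deriv (fun s => X s (w (Fin.last k))) u * sigTerm X a u (w ∘ Fin.castSucc) := by
  classical
  set f : Fin (k+1) → ℝ → ℝ := fun m t => deriv (fun s => X s (w m)) t with hf
  set T := {t : Fin (k+1) → ℝ | StrictMono t ∧ ∀ m, t m ∈ Set.Ioo a b} with hT
  set e := MeasurableEquiv.piFinSuccAbove (fun _ : Fin (k+1) => ℝ) (Fin.last k) with he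
  have hmp : MeasurePreserving e.symm volume volume :=
    (volume_preserving_piFinSuccAbove (fun _ : Fin (k+1) => ℝ) (Fin.last k)).symm _
  have hesymm : ∀ p : ℝ × (Fin k → ℝ), e.symm p = Fin.snoc p.2 p.1 := by
    rintro ⟨x, y⟩
    show (Fin.insertNthEquiv (fun _ : Fin (k+1) => ℝ) (Fin.last k)) (x, y) = _
    simp [Fin.insertNthEquiv, Fin.insertNth_last]
  set G : ℝ × (Fin k → ℝ) → ℝ :=
    fun p => f (Fin.last k) p.1 * ∏ m : Fin k, f m.castSucc (p.2 m) with hG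
  set S : Set (ℝ × (Fin k → ℝ)) := e.symm ⁻¹' T with hSdef
  have hSmeas : MeasurableSet S :=
    measurableSet_preimage e.symm.measurable (measurableSet_simplex a b)
  have hS : S = {p : ℝ × (Fin k → ℝ) |
      p.1 ∈ Set.Ioo a b ∧ StrictMono p.2 ∧ ∀ m, p.2 m ∈ Set.Ioo a p.1} := by
    ext ⟨x, y⟩
    simp only [hSdef, Set.mem_preimage, hesymm (x, y), hT, Set.mem_setOf_eq,
      strictMono_snoc_iff]
    constructor
    · rintro ⟨⟨hy, hyx⟩, hm⟩
      have hx : x ∈ Set.Ioo a b := by simpa using hm (Fin.last k)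
      refine ⟨hx, hy, fun m => ?_⟩
      have := hm m.castSucc
      simp only [Fin.snoc_castSucc] at this
      exact ⟨this.1, hyx m⟩
    · rintro ⟨hx, hy, hm⟩
      refine ⟨⟨hy, fun m => (hm m).2⟩, fun m' => ?_⟩
      rcases Fin.eq_castSucc_or_eq_last m' with ⟨m, rfl⟩ | rfl
      · simpa using ⟨(hm m).1, lt_trans (hm m).2 hx.2⟩
      · simpa using hx
  -- transfer the pi-integral to the product space
  have key : (∫ p in S, G p) = sigTerm X a b w := by
    have := hmp.setIntegral_preimage_emb e.symm.measurableEmbedding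
      (fun t => ∏ m, f m (t m)) T
    rw [show sigTerm X a b w = ∫ t in T, ∏ m, f m (t m) from rfl, ← this]
    refine setIntegral_congr_fun hSmeas fun p _ => ?_
    rw [hesymm p, hG]
    rw [Fin.prod_univ_castSucc]
    simp [mul_comm]
  rw [← key]
  -- continuity and integrability
  have hGcont : Continuous G := by
    apply Continuous.mul ((hd _).comp continuous_fst)
    exact continuous_finset_prod _ fun m _ =>
      (hd _).comp ((continuous_apply m).comp continuous_snd)
  have hsub : S ⊆ Set.Icc a b ×ˢ Set.pi Set.univ fun _ : Fin k => Set.Icc a b := by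
    rintro ⟨x, y⟩ hp
    rw [hS] at hp
    obtain ⟨hx, -, hm⟩ := hp
    exact ⟨⟨hx.1.le, hx.2.le⟩, fun m _ =>
      ⟨(hm m).1.le, ((hm m).2.trans hx.2).le⟩⟩
  have hK : IsCompact (Set.Icc a b ×ˢ Set.pi Set.univ fun _ : Fin k => Set.Icc a b) :=
    isCompact_Icc.prod (isCompact_univ_pi fun _ => isCompact_Icc)
  have hIntOn : IntegrableOn G S volume :=
    (hGcont.continuousOn.integrableOn_compact hK).mono_set hsub
  have hind : Integrable (S.indicator G) volume :=
    (integrable_indicator_iff hSmeas).2 hIntOn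
  rw [← integral_indicator hSmeas]
  rw [Measure.volume_eq_prod] at hind ⊢
  rw [integral_prod _ hind]
  rw [← integral_indicator measurableSet_Ioo]
  congr 1
  funext x
  by_cases hx : x ∈ Set.Ioo a b
  · rw [Set.indicator_of_mem hx]
    have hTx : (fun y => S.indicator G (x, y))
        = Set.indicator {y : Fin k → ℝ | StrictMono y ∧ ∀ m, y m ∈ Set.Ioo a x}
          (fun y => G (x, y)) := by
      funext y
      by_cases hy : y ∈ {y : Fin k → ℝ | StrictMono y ∧ ∀ m, y m ∈ Set.Ioo a x}
      · rw [Set.indicator_of_mem hy, Set.indicator_of_mem (by rw [hS]; exact ⟨hx, hy⟩)]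
      · rw [Set.indicator_of_notMem hy, Set.indicator_of_notMem
          (by rw [hS]; rintro ⟨-, h2, h3⟩; exact hy ⟨h2, h3⟩)]
    rw [hTx, integral_indicator (measurableSet_simplex a x)]
    rw [show (fun y : Fin k → ℝ => G (x, y))
        = fun y => f (Fin.last k) x * ∏ m : Fin k, f m.castSucc (y m) from rfl]
    rw [integral_const_mul]
    rfl
  · rw [Set.indicator_of_notMem hx]
    have : ∀ y, S.indicator G (x, y) = 0 := fun y =>
      Set.indicator_of_notMem (by rw [hS]; rintro ⟨h1, -⟩; exact hx h1) _
    simp [this]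

/-- The shuffle product identity for the words `(i,j)` and `(i)`:
`S^{i,j}·S^i = 2·S^{i,i,j} + S^{i,j,i}`. -/
theorem sigTerm_shuffle_ij_i {d : ℕ} (a b : ℝ) (hab : a ≤ b)
    (X : ℝ → Fin d → ℝ) (hX : ContDiff ℝ 1 X) (i j : Fin d) :
    sigTerm X a b ![i, j] * sigTerm X a b ![i]
        = 2 * sigTerm X a b ![i, i, j] + sigTerm X a b ![i, j, i] := by
  have hd : ∀ m : Fin d, Continuous (deriv fun s => X s m) := fun m =>
    ((contDiff_pi.mp hX) m).continuous_deriv le_rfl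
  set f : ℝ → ℝ := deriv (fun s => X s i) with hfdef
  set g : ℝ → ℝ := deriv (fun s => X s j) with hgdef
  have hfc : Continuous f := hd i
  have hgc : Continuous g := hd j
  set A : ℝ → ℝ := fun u => ∫ v in a..u, f v with hAdef
  have hA : ∀ u, HasDerivAt A (f u) u := fun u =>
    (hfc.integral_hasStrictDerivAt a u).hasDerivAt
  have hAc : Continuous A := continuous_iff_continuousAt.2 fun u => (hA u).continuousAt
  set C : ℝ → ℝ := fun u => ∫ v in a..u, g v * A v with hCdef
  have hC : ∀ u, HasDerivAt C (g u * A u) u := fun u =>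
    ((hgc.mul hAc).integral_hasStrictDerivAt a u).hasDerivAt
  have hCc : Continuous C := continuous_iff_continuousAt.2 fun u => (hC u).continuousAt
  set B : ℝ → ℝ := fun u => ∫ v in a..u, f v * A v with hBdef
  have hA0 : A a = 0 := intervalIntegral.integral_same
  have hC0 : C a = 0 := intervalIntegral.integral_same
  have hIoo : ∀ (F : ℝ → ℝ) (u : ℝ), a ≤ u →
      (∫ v in Set.Ioo a u, F v) = ∫ v in a..u, F v := fun F u hu => by
    rw [intervalIntegral.integral_of_le hu, integral_Ioc_eq_integral_Ioo]
  -- words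
  have hw1 : (![i, j] ∘ Fin.castSucc : Fin 1 → Fin d) = ![i] := by
    funext x; fin_cases x <;> rfl
  have hw2 : (![i, i, j] ∘ Fin.castSucc : Fin 2 → Fin d) = ![i, i] := by
    funext x; fin_cases x <;> rfl
  have hw3 : (![i, j, i] ∘ Fin.castSucc : Fin 2 → Fin d) = ![i, j] := by
    funext x; fin_cases x <;> rfl
  -- level 1
  have s1 : ∀ u, a ≤ u → sigTerm X a u ![i] = A u := by
    intro u hu
    rw [sigTerm_succ X hd a u ![i]]
    rw [setIntegral_congr_fun measurableSet_Ioo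
      (fun v _ => by simp only [sigTerm_nil, mul_one]; rfl : Set.EqOn
        (fun v => deriv (fun s => X s (![i] (Fin.last 0))) v *
          sigTerm X a v (![i] ∘ Fin.castSucc)) f (Set.Ioo a u))]
    exact hIoo f u hu
  -- level 2
  have s2 : ∀ u, a ≤ u → sigTerm X a u ![i, j] = C u := by
    intro u hu
    rw [sigTerm_succ X hd a u ![i, j]]
    rw [setIntegral_congr_fun measurableSet_Ioo
      (fun v hv => by simp only [hw1, s1 v hv.1.le]; rfl : Set.EqOn
        (fun v => deriv (fun s => X s (![i, j] (Fin.last 1))) v *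
          sigTerm X a v (![i, j] ∘ Fin.castSucc)) (fun v => g v * A v) (Set.Ioo a u))]
    exact hIoo _ u hu
  have s2' : ∀ u, a ≤ u → sigTerm X a u ![i, i] = B u := by
    intro u hu
    rw [sigTerm_succ X hd a u ![i, i]]
    rw [setIntegral_congr_fun measurableSet_Ioo
      (fun v hv => by
        simp only [show (![i, i] ∘ Fin.castSucc : Fin 1 → Fin d) = ![i] by
          funext x; fin_cases x <;> rfl, s1 v hv.1.le]; rfl : Set.EqOn
        (fun v => deriv (fun s => X s (![i, i] (Fin.last 1))) v *
          sigTerm X a v (![i, i] ∘ Fin.castSucc)) (fun v => f v * A v) (Set.Ioo a u))]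
    exact hIoo _ u hu
  -- level 3
  have s3a : sigTerm X a b ![i, i, j] = ∫ v in a..b, g v * B v := by
    rw [sigTerm_succ X hd a b ![i, i, j]]
    rw [setIntegral_congr_fun measurableSet_Ioo
      (fun v hv => by simp only [hw2, s2' v hv.1.le]; rfl : Set.EqOn
        (fun v => deriv (fun s => X s (![i, i, j] (Fin.last 2))) v *
          sigTerm X a v (![i, i, j] ∘ Fin.castSucc)) (fun v => g v * B v) (Set.Ioo a b))]
    exact hIoo _ b hab
  have s3b : sigTerm X a b ![i, j, i] = ∫ v in a..b, f v * C v := by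
    rw [sigTerm_succ X hd a b ![i, j, i]]
    rw [setIntegral_congr_fun measurableSet_Ioo
      (fun v hv => by simp only [hw3, s2 v hv.1.le]; rfl : Set.EqOn
        (fun v => deriv (fun s => X s (![i, j, i] (Fin.last 2))) v *
          sigTerm X a v (![i, j, i] ∘ Fin.castSucc)) (fun v => f v * C v) (Set.Ioo a b))]
    exact hIoo _ b hab
  rw [s1 b hab, s2 b hab, s3a, s3b]
  -- B = A^2/2
  have hB2 : ∀ v, B v = A v ^ 2 / 2 := by
    intro v
    have hder : ∀ u ∈ Set.uIcc a v, HasDerivAt (fun w => A w ^ 2 / 2) (f u * A u) u := by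
      intro u _
      have h1 := ((hA u).pow 2).div_const 2
      exact h1.congr_deriv (by push_cast; ring)
    have hint : IntervalIntegrable (fun u => f u * A u) volume a v :=
      (hfc.mul hAc).intervalIntegrable _ _
    have := intervalIntegral.integral_eq_sub_of_hasDerivAt hder hint
    rw [hBdef]
    simp only [this, hA0]
    ring
  -- main FTC identity
  have hAC : ∀ u ∈ Set.uIcc a b,
      HasDerivAt (fun w => A w * C w) (f u * C u + g u * A u * A u) u := by
    intro u _
    have h1 := (hA u).mul (hC u)
    exact h1.congr_deriv (by ring)
  have hi1 : IntervalIntegrable (fun u => f u * C u) volume a b :=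
    (hfc.mul hCc).intervalIntegrable _ _
  have hi2 : IntervalIntegrable (fun u => g u * A u * A u) volume a b :=
    ((hgc.mul hAc).mul hAc).intervalIntegrable _ _
  have heq : (∫ u in a..b, (f u * C u + g u * A u * A u)) = A b * C b - A a * C a :=
    intervalIntegral.integral_eq_sub_of_hasDerivAt hAC (hi1.add hi2)
  have h2B : 2 * (∫ v in a..b, g v * B v) = ∫ u in a..b, g u * A u * A u := by
    rw [← intervalIntegral.integral_const_mul]
    apply intervalIntegral.integral_congr
    intro v _
    simp only [hB2]
    ring
  rw [h2B]
  rw [intervalIntegral.integral_add hi1 hi2] at heq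
  rw [hA0, hC0] at heq
  linarith [heq]
end

section
/- (Time-reversal identity, coefficient form) Let X : [a,b] → ℝ^d be a continuously differentiable path and let ←X : [a,b] → ℝ^d be its time-reversal, ←X_t = X_{a+b−t}. Then for every k ≥ 1 and every word (i₁,…,i_k) with letters in {1,…,d}: Σ_{j=0}^{k} S(X)^{i₁,…,i_j}_{a,b} · S(←X)^{i_{j+1},…,i_k}_{a,b} = 0, where the terms with j = 0 and j = k involve the empty-word convention S^∅ = 1. (This expresses that the signature of ←X is the inverse of the signature of X under the tensor product.) -/
open MeasureTheory

namespace SigRev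

/-- The open cube `(a,b)^n`. -/
def cube (a b : ℝ) (n : ℕ) : Set (Fin n → ℝ) := {t | ∀ i, t i ∈ Set.Ioo a b}

def monoSet (n : ℕ) : Set (Fin n → ℝ) := {t | StrictMono t}
def antiSet (n : ℕ) : Set (Fin n → ℝ) := {t | StrictAnti t}

/-- increasing on coordinates `< j`, decreasing on coordinates `≥ j`. -/
def blocks (k j : ℕ) : Set (Fin k → ℝ) :=
  {u | (∀ p q : Fin k, p.1 < q.1 → q.1 < j → u p < u q) ∧
       (∀ p q : Fin k, p.1 < q.1 → j ≤ p.1 → u q < u p)}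

lemma apply_val {k : ℕ} (u : Fin k → ℝ) {p q : Fin k} (h : p.1 = q.1) : u p = u q := by
  congr 1; exact Fin.ext h

lemma measurableSet_monoSet (n : ℕ) : MeasurableSet (monoSet n) := by
  have : monoSet n = ⋂ (p : Fin n) (q : Fin n) (_ : p < q), {t : Fin n → ℝ | t p < t q} := by
    ext t; simp [monoSet, StrictMono]
  rw [this]
  exact MeasurableSet.iInter fun p => MeasurableSet.iInter fun q => MeasurableSet.iInter fun _ =>
    measurableSet_lt (measurable_pi_apply p) (measurable_pi_apply q)

lemma measurableSet_antiSet (n : ℕ) : MeasurableSet (antiSet n) := by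
  have : antiSet n = ⋂ (p : Fin n) (q : Fin n) (_ : p < q), {t : Fin n → ℝ | t q < t p} := by
    ext t; simp [antiSet, StrictAnti]
  rw [this]
  exact MeasurableSet.iInter fun p => MeasurableSet.iInter fun q => MeasurableSet.iInter fun _ =>
    measurableSet_lt (measurable_pi_apply q) (measurable_pi_apply p)

lemma measurableSet_cube (a b : ℝ) (n : ℕ) : MeasurableSet (cube a b n) := by
  have : cube a b n = ⋂ (i : Fin n), (fun t : Fin n → ℝ => t i) ⁻¹' (Set.Ioo a b) := by
    ext t; simp [cube]
  rw [this]
  exact MeasurableSet.iInter fun i => (measurable_pi_apply i) measurableSet_Ioo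

lemma measurableSet_blocks (k j : ℕ) : MeasurableSet (blocks k j) := by
  have : blocks k j = (⋂ (p : Fin k) (q : Fin k) (_ : p.1 < q.1) (_ : q.1 < j),
      {u : Fin k → ℝ | u p < u q}) ∩
      (⋂ (p : Fin k) (q : Fin k) (_ : p.1 < q.1) (_ : j ≤ p.1), {u : Fin k → ℝ | u q < u p}) := by
    ext u; simp [blocks]
  rw [this]
  exact (MeasurableSet.iInter fun p => MeasurableSet.iInter fun q => MeasurableSet.iInter fun _ =>
      MeasurableSet.iInter fun _ =>
        measurableSet_lt (measurable_pi_apply p) (measurable_pi_apply q)).inter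
    (MeasurableSet.iInter fun p => MeasurableSet.iInter fun q => MeasurableSet.iInter fun _ =>
      MeasurableSet.iInter fun _ =>
        measurableSet_lt (measurable_pi_apply q) (measurable_pi_apply p))

lemma ae_injective (k : ℕ) : ∀ᵐ u : Fin k → ℝ, Function.Injective u := by
  rw [MeasureTheory.ae_iff]
  have hsub : {u : Fin k → ℝ | ¬Function.Injective u} ⊆ ⋃ (p : Fin k) (q : Fin k) (_ : p ≠ q),
      {u : Fin k → ℝ | u p = u q} := by
    intro u hu
    simp only [Set.mem_setOf_eq, Function.Injective] at hu
    push_neg at hu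
    obtain ⟨p, q, hpq, hne⟩ := hu
    exact Set.mem_iUnion.2 ⟨p, Set.mem_iUnion.2 ⟨q, Set.mem_iUnion.2 ⟨hne, hpq⟩⟩⟩
  refine measure_mono_null hsub ?_
  refine measure_iUnion_null fun p => measure_iUnion_null fun q => measure_iUnion_null fun hpq => ?_
  have hker : {u : Fin k → ℝ | u p = u q} =
      (LinearMap.ker ((LinearMap.proj p : (Fin k → ℝ) →ₗ[ℝ] ℝ) - LinearMap.proj q) : Set (Fin k → ℝ)) := by
    ext u
    simp [LinearMap.mem_ker, sub_eq_zero, eq_comm]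
  rw [hker]
  refine Measure.addHaar_submodule volume _ ?_
  intro htop
  have h1 : (Pi.single p 1 : Fin k → ℝ) ∈
      LinearMap.ker ((LinearMap.proj p : (Fin k → ℝ) →ₗ[ℝ] ℝ) - LinearMap.proj q) := by
    rw [htop]; exact Submodule.mem_top
  rw [LinearMap.mem_ker, LinearMap.sub_apply, LinearMap.proj_apply, LinearMap.proj_apply] at h1
  rw [Pi.single_eq_same, Pi.single_eq_of_ne (Ne.symm hpq)] at h1
  norm_num at h1


open Classical in
lemma signed_sum (k : ℕ) (hk : 1 ≤ k) (u : Fin k → ℝ) (hu : Function.Injective u) :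
    ∑ j : Fin (k + 1), ((-1 : ℝ)) ^ (k - j.1) * (if u ∈ blocks k j.1 then (1:ℝ) else 0) = 0 := by
  by_cases hex : ∃ j : ℕ, u ∈ blocks k j
  · set P : ℕ → Prop := fun j => u ∈ blocks k j with hP
    let m := Nat.find hex
    have hm : P m := Nat.find_spec hex
    have hmin : ∀ j, j < m → ¬ P j := fun j hj => Nat.find_min hex hj
    -- m < k
    have hmk : m < k := by
      rcases Nat.lt_or_ge m k with h | h
      · exact h
      · exfalso
        have hk1 : P (k - 1) := by
          constructor
          · intro p q hpq hq
            exact hm.1 p q hpq (by omega)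
          · intro p q hpq hp
            exact absurd q.isLt (by omega)
        have : m ≤ k - 1 := Nat.find_le hk1
        omega
    -- u (m-1) < u m when m ≥ 1  (via minimality)
    have hkey : ∀ hm1 : 1 ≤ m, u ⟨m - 1, by omega⟩ < u ⟨m, hmk⟩ := by
      intro hm1
      by_contra hlt
      have hne : u ⟨m - 1, by omega⟩ ≠ u ⟨m, hmk⟩ := by
        intro h; have := hu h; simp [Fin.ext_iff] at this; omega
      have hgt : u ⟨m, hmk⟩ < u ⟨m - 1, by omega⟩ := by
        rcases lt_or_ge (u ⟨m, hmk⟩) (u ⟨m - 1, by omega⟩) with h | h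
        · exact h
        · exact absurd (lt_of_le_of_ne h hne) hlt
      have hPm1 : P (m - 1) := by
        constructor
        · intro p q hpq hq; exact hm.1 p q hpq (by omega)
        · intro p q hpq hp
          rcases Nat.lt_or_ge p.1 m with hpm | hpm
          · -- p.1 = m - 1
            have hpv : p.1 = m - 1 := by omega
            rcases Nat.lt_or_ge q.1 (m+1) with hqm | hqm
            · -- q.1 = m
              have hqv : q.1 = m := by omega
              calc u q = u ⟨m, hmk⟩ := apply_val u (by simp only [Fin.val_mk]; omega)
                _ < u ⟨m - 1, by omega⟩ := hgt
                _ = u p := apply_val u (by simp only [Fin.val_mk]; omega)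
            · -- q.1 > m
              have h1 : u q < u ⟨m, hmk⟩ := hm.2 ⟨m, hmk⟩ q (by simp; omega) (by simp)
              calc u q < u ⟨m, hmk⟩ := h1
                _ < u ⟨m - 1, by omega⟩ := hgt
                _ = u p := apply_val u (by simp only [Fin.val_mk]; omega)
          · exact hm.2 p q hpq hpm
      exact hmin (m-1) (by omega) hPm1
    -- P (m+1)
    have hm1 : P (m + 1) := by
      constructor
      · intro p q hpq hq
        rcases Nat.lt_or_ge q.1 m with h | h
        · exact hm.1 p q hpq h
        · have hqv : q.1 = m := by omega
          have hm1 : 1 ≤ m := by omega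
          rcases Nat.lt_or_ge p.1 (m - 1) with hp | hp
          · calc u p < u ⟨m - 1, by omega⟩ := hm.1 p ⟨m - 1, by omega⟩ (by simpa) (by simp; omega)
              _ < u ⟨m, hmk⟩ := hkey hm1
              _ = u q := apply_val u (by simp only [Fin.val_mk]; omega)
          · have hpv : p.1 = m - 1 := by omega
            calc u p = u ⟨m - 1, by omega⟩ := apply_val u (by simp only [Fin.val_mk]; omega)
              _ < u ⟨m, hmk⟩ := hkey hm1
              _ = u q := apply_val u (by simp only [Fin.val_mk]; omega)
      · intro p q hpq hp
        exact hm.2 p q hpq (by omega)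
    -- uniqueness: any j ≤ k with P j is m or m+1
    have huniq : ∀ j : ℕ, j ≤ k → P j → j = m ∨ j = m + 1 := by
      intro j hj hPj
      by_contra hcon
      push_neg at hcon
      have hjm : m ≤ j := Nat.find_le hPj
      have hj2 : m + 2 ≤ j := by omega
      have hm1k : m + 1 < k := by omega
      have h1 : u ⟨m, hmk⟩ < u ⟨m+1, hm1k⟩ := hPj.1 _ _ (by simp) (by simp; omega)
      have h2 : u ⟨m+1, hm1k⟩ < u ⟨m, hmk⟩ := hm.2 ⟨m, hmk⟩ ⟨m+1, hm1k⟩ (by simp) (by simp)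
      linarith
    -- now compute the sum
    have hmm : m + 1 < k + 1 + 1 := by omega
    rw [Finset.sum_eq_add_of_mem (⟨m, by omega⟩ : Fin (k+1)) (⟨m+1, by omega⟩ : Fin (k+1))
      (Finset.mem_univ _) (Finset.mem_univ _) (by simp [Fin.ext_iff])
      ?_]
    · simp only [if_pos (show u ∈ blocks k m from hm), if_pos (show u ∈ blocks k (m+1) from hm1)]
      have hkm : k - m = (k - (m+1)) + 1 := by omega
      rw [hkm, pow_succ]
      ring
    · intro c _ hc
      have : ¬ P c.1 := by
        intro hPc
        rcases huniq c.1 (by omega) hPc with h | h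
        · exact hc.1 (Fin.ext h)
        · exact hc.2 (Fin.ext h)
      rw [if_neg this, mul_zero]
  · push_neg at hex
    refine Finset.sum_eq_zero fun j _ => ?_
    rw [if_neg (hex j.1), mul_zero]

/-- change of variables `t ↦ (a+b) - t` coordinatewise. -/
lemma reverse_integral {m : ℕ} (a b : ℝ) (f : Fin m → ℝ → ℝ) :
    ∫ t in monoSet m ∩ cube a b m, ∏ i, f i ((a + b) - t i)
      = ∫ t in antiSet m ∩ cube a b m, ∏ i, f i (t i) := by
  have mp : MeasurePreserving (fun t : Fin m → ℝ => (fun _ => a + b) - t) volume volume :=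
    Measure.measurePreserving_sub_left volume _
  have hemb : MeasurableEmbedding (fun t : Fin m → ℝ => (fun _ => a + b) - t) :=
    (MeasurableEquiv.subLeft (fun _ => a + b)).measurableEmbedding
  have h := mp.setIntegral_preimage_emb hemb (fun t => ∏ i, f i (t i)) (antiSet m ∩ cube a b m)
  have hpre : (fun t : Fin m → ℝ => (fun _ => a + b) - t) ⁻¹' (antiSet m ∩ cube a b m)
      = monoSet m ∩ cube a b m := by
    ext t
    simp only [Set.mem_preimage, Set.mem_inter_iff, monoSet, antiSet, cube, Set.mem_setOf_eq,
      Pi.sub_apply, Set.mem_Ioo]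
    constructor
    · rintro ⟨h1, h2⟩
      refine ⟨fun p q hpq => ?_, fun i => ?_⟩
      · have := h1 hpq; simp at this; linarith
      · have := h2 i; constructor <;> linarith [this.1, this.2]
    · rintro ⟨h1, h2⟩
      refine ⟨fun p q hpq => ?_, fun i => ?_⟩
      · have := h1 hpq; simp; linarith
      · have := h2 i; constructor <;> linarith [this.1, this.2]
  rw [hpre] at h
  simp only [Pi.sub_apply] at h
  exact h

lemma prod_reduction {k : ℕ} (a b : ℝ) (f : Fin k → ℝ → ℝ) (j : ℕ) (hj : j ≤ k) :
    (∫ s in monoSet j ∩ cube a b j, ∏ i : Fin j, f (Fin.castLE hj i) (s i)) *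
      (∫ t in antiSet (k - j) ∩ cube a b (k - j),
        ∏ i : Fin (k - j), f ⟨j + i.1, by omega⟩ (t i)) =
    ∫ u in blocks k j ∩ cube a b k, ∏ i, f i (u i) := by
  classical
  set e : Fin j ⊕ Fin (k - j) ≃ Fin k := finSumFinEquiv.trans (finCongr (by omega)) with he
  set Φ : (Fin k → ℝ) ≃ᵐ ((Fin j → ℝ) × (Fin (k - j) → ℝ)) :=
    (MeasurableEquiv.piCongrLeft (fun _ : Fin k => ℝ) e).symm.trans
      (MeasurableEquiv.sumPiEquivProdPi (fun _ => ℝ)) with hΦ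
  have mp1 : MeasurePreserving
      (⇑(MeasurableEquiv.piCongrLeft (fun _ : Fin k => ℝ) e).symm) volume volume :=
    (volume_measurePreserving_piCongrLeft (fun _ : Fin k => ℝ) e).symm _
  have mp2 := volume_measurePreserving_sumPiEquivProdPi (fun _ : Fin j ⊕ Fin (k - j) => ℝ)
  have mp : MeasurePreserving (⇑Φ) volume volume := mp2.comp mp1
  have hemb : MeasurableEmbedding (⇑Φ) := Φ.measurableEmbedding
  have hΦapp : ∀ (u : Fin k → ℝ),
      Φ u = (fun i => u (e (Sum.inl i)), fun i => u (e (Sum.inr i))) := by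
    intro u; rfl
  have key := mp.setIntegral_preimage_emb hemb
    (fun z : (Fin j → ℝ) × (Fin (k - j) → ℝ) =>
      (∏ i : Fin j, f (Fin.castLE hj i) (z.1 i)) *
        ∏ i : Fin (k - j), f ⟨j + i.1, by omega⟩ (z.2 i))
    ((monoSet j ∩ cube a b j) ×ˢ (antiSet (k - j) ∩ cube a b (k - j)))
  have hsplit := MeasureTheory.setIntegral_prod_mul
    (μ := (volume : Measure (Fin j → ℝ))) (ν := (volume : Measure (Fin (k - j) → ℝ)))
    (fun s : Fin j → ℝ => ∏ i : Fin j, f (Fin.castLE hj i) (s i))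
    (fun t : Fin (k - j) → ℝ => ∏ i : Fin (k - j), f ⟨j + i.1, by omega⟩ (t i))
    (monoSet j ∩ cube a b j) (antiSet (k - j) ∩ cube a b (k - j))
  rw [← hsplit]
  rw [show ((volume : Measure (Fin j → ℝ)).prod (volume : Measure (Fin (k - j) → ℝ)))
      = (volume : Measure ((Fin j → ℝ) × (Fin (k - j) → ℝ))) from (Measure.volume_eq_prod _ _).symm]
  rw [← key]
  -- now both sides are integrals over (Fin k → ℝ)
  have hval1 : ∀ i : Fin j, (e (Sum.inl i)).1 = i.1 := by
    intro i; simp [he]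
  have hval2 : ∀ i : Fin (k - j), (e (Sum.inr i)).1 = j + i.1 := by
    intro i; simp [he]
  have hsets : (⇑Φ) ⁻¹' ((monoSet j ∩ cube a b j) ×ˢ (antiSet (k - j) ∩ cube a b (k - j)))
      = blocks k j ∩ cube a b k := by
    ext u
    simp only [Set.mem_preimage, hΦapp, Set.mem_prod, Set.mem_inter_iff, monoSet, antiSet,
      cube, blocks, Set.mem_setOf_eq]
    constructor
    · rintro ⟨⟨hmo, hc1⟩, ⟨han, hc2⟩⟩
      refine ⟨⟨?_, ?_⟩, ?_⟩
      · intro p q hpq hq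
        have h := hmo (show (⟨p.1, by omega⟩ : Fin j) < ⟨q.1, by omega⟩ from by
          simp only [Fin.mk_lt_mk]; omega)
        calc u p = u (e (Sum.inl ⟨p.1, by omega⟩)) := apply_val u (by rw [hval1])
          _ < u (e (Sum.inl ⟨q.1, by omega⟩)) := h
          _ = u q := apply_val u (by rw [hval1])
      · intro p q hpq hp
        have h := han (show (⟨p.1 - j, by omega⟩ : Fin (k - j)) < ⟨q.1 - j, by omega⟩ from by
          simp only [Fin.mk_lt_mk]; omega)
        calc u q = u (e (Sum.inr ⟨q.1 - j, by omega⟩)) := apply_val u (by rw [hval2]; simp only [Fin.val_mk]; omega)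
          _ < u (e (Sum.inr ⟨p.1 - j, by omega⟩)) := h
          _ = u p := apply_val u (by rw [hval2]; simp only [Fin.val_mk]; omega)
      · intro i
        rcases Nat.lt_or_ge i.1 j with h | h
        · have := hc1 ⟨i.1, h⟩
          rwa [apply_val u (p := e (Sum.inl ⟨i.1, h⟩)) (q := i) (by rw [hval1])] at this
        · have := hc2 ⟨i.1 - j, by omega⟩
          rwa [apply_val u (p := e (Sum.inr ⟨i.1 - j, by omega⟩)) (q := i)
            (by rw [hval2]; simp only [Fin.val_mk]; omega)] at this
    · rintro ⟨⟨hb1, hb2⟩, hc⟩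
      refine ⟨⟨?_, fun i => ?_⟩, ⟨?_, fun i => ?_⟩⟩
      · intro p q hpq
        exact hb1 _ _ (by rw [hval1, hval1]; exact hpq) (by rw [hval1]; omega)
      · exact hc _
      · intro p q hpq
        exact hb2 _ _ (by rw [hval2, hval2]; exact Nat.add_lt_add_left hpq j) (by rw [hval2]; omega)
      · exact hc _
  rw [hsets]
  refine setIntegral_congr_fun ((measurableSet_blocks k j).inter (measurableSet_cube a b k)) fun u _ => ?_
  simp only [hΦapp]
  conv_rhs => rw [← Equiv.prod_comp e (fun i => f i (u i))]
  rw [Fintype.prod_sum_type (fun x : Fin j ⊕ Fin (k - j) => f (e x) (u (e x)))]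
  congr 1

lemma sum_integrals {k : ℕ} (hk : 1 ≤ k) (a b : ℝ) (f : Fin k → ℝ → ℝ)
    (hf : ∀ i, Continuous (f i)) :
    ∑ j : Fin (k + 1), ((-1 : ℝ)) ^ (k - j.1) *
      ∫ u in blocks k j.1 ∩ cube a b k, ∏ i, f i (u i) = 0 := by
  classical
  have hF : Continuous fun u : Fin k → ℝ => ∏ i, f i (u i) :=
    continuous_finset_prod _ fun i _ => (hf i).comp (continuous_apply i)
  have hmeas : ∀ j : ℕ, MeasurableSet (blocks k j ∩ cube a b k) :=
    fun j => (measurableSet_blocks k j).inter (measurableSet_cube a b k)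
  have hint : ∀ j : ℕ,
      IntegrableOn (fun u : Fin k → ℝ => ∏ i, f i (u i)) (blocks k j ∩ cube a b k) := by
    intro j
    have hcomp : IsCompact (Set.pi Set.univ fun _ : Fin k => Set.Icc a b) :=
      isCompact_univ_pi fun _ => isCompact_Icc
    refine (hF.continuousOn.integrableOn_compact hcomp).mono_set ?_
    rintro u ⟨-, hu⟩
    intro i _
    exact Set.mem_Icc_of_Ioo (hu i)
  have hrw : ∀ j : Fin (k + 1),
      ((-1 : ℝ)) ^ (k - j.1) * ∫ u in blocks k j.1 ∩ cube a b k, ∏ i, f i (u i)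
        = ∫ u, ((-1 : ℝ)) ^ (k - j.1) *
            Set.indicator (blocks k j.1 ∩ cube a b k) (fun u => ∏ i, f i (u i)) u := by
    intro j
    rw [MeasureTheory.integral_const_mul, integral_indicator (hmeas j.1)]
  rw [Finset.sum_congr rfl fun j _ => hrw j]
  rw [← integral_finset_sum]
  · refine integral_eq_zero_of_ae ?_
    filter_upwards [ae_injective k] with u hu
    have hsplit : ∀ j : Fin (k + 1),
        Set.indicator (blocks k j.1 ∩ cube a b k) (fun u => ∏ i, f i (u i)) u
          = (if u ∈ blocks k j.1 then (1 : ℝ) else 0) *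
              Set.indicator (cube a b k) (fun u => ∏ i, f i (u i)) u := by
      intro j
      by_cases h1 : u ∈ blocks k j.1 <;> by_cases h2 : u ∈ cube a b k <;>
        simp [Set.indicator, h1, h2]
    simp only [hsplit]
    calc ∑ j : Fin (k + 1), (-1 : ℝ) ^ (k - j.1) *
          ((if u ∈ blocks k j.1 then (1 : ℝ) else 0) *
            Set.indicator (cube a b k) (fun u => ∏ i, f i (u i)) u)
        = (∑ j : Fin (k + 1), (-1 : ℝ) ^ (k - j.1) *
            (if u ∈ blocks k j.1 then (1 : ℝ) else 0)) *
            Set.indicator (cube a b k) (fun u => ∏ i, f i (u i)) u := by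
          rw [Finset.sum_mul]
          exact Finset.sum_congr rfl fun j _ => (mul_assoc _ _ _).symm
      _ = 0 := by rw [signed_sum k hk u hu, zero_mul]
  · intro j _
    exact (((hint j.1).integrable_indicator (hmeas j.1))).const_mul _

lemma sigTerm_reverse {d : ℕ} (X : ℝ → Fin d → ℝ) (hX : ContDiff ℝ 1 X) (a b : ℝ)
    {m : ℕ} (v : Fin m → Fin d) :
    sigTerm (fun t => X (a + b - t)) a b v
      = (-1 : ℝ) ^ m *
          ∫ t in antiSet m ∩ cube a b m, ∏ i, deriv (fun s => X s (v i)) (t i) := by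
  have hcoord : ∀ c : Fin d, ContDiff ℝ 1 fun s => X s c := fun c =>
    (ContinuousLinearMap.proj (R := ℝ) (φ := fun _ : Fin d => ℝ) c).contDiff.comp hX
  have hder : ∀ (c : Fin d) (τ : ℝ),
      deriv (fun s => X (a + b - s) c) τ = -(deriv (fun s => X s c) (a + b - τ)) := by
    intro c τ
    have h1 : HasDerivAt (fun s : ℝ => a + b - s) (-1) τ := (hasDerivAt_id τ).const_sub (a + b)
    have hD : HasDerivAt (fun s => X s c) (deriv (fun s => X s c) (a + b - τ)) (a + b - τ) :=
      (((hcoord c).differentiable one_ne_zero) (a + b - τ)).hasDerivAt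
    have h2 := hD.comp τ h1
    have h3 : HasDerivAt (fun s => X (a + b - s) c)
        (deriv (fun s => X s c) (a + b - τ) * (-1)) τ := h2
    rw [h3.deriv]; ring
  show (∫ t in {t : Fin m → ℝ | StrictMono t ∧ ∀ i, t i ∈ Set.Ioo a b},
      ∏ i, deriv (fun s => X (a + b - s) (v i)) (t i)) = _
  rw [show {t : Fin m → ℝ | StrictMono t ∧ ∀ i, t i ∈ Set.Ioo a b}
      = monoSet m ∩ cube a b m from rfl]
  simp only [hder]
  rw [show (fun t : Fin m → ℝ => ∏ i, -(deriv (fun s => X s (v i)) (a + b - t i)))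
      = fun t : Fin m → ℝ =>
          (-1 : ℝ) ^ m * ∏ i, (fun p => deriv (fun s => X s (v p))) i ((a + b) - t i) from
    funext fun t => by
      calc ∏ i, -(deriv (fun s => X s (v i)) (a + b - t i))
          = ∏ i, ((-1 : ℝ) * deriv (fun s => X s (v i)) (a + b - t i)) := by
            refine Finset.prod_congr rfl fun i _ => by ring
        _ = (∏ _i : Fin m, (-1 : ℝ)) * ∏ i, deriv (fun s => X s (v i)) (a + b - t i) :=
            Finset.prod_mul_distrib
        _ = _ := by simp]
  rw [MeasureTheory.integral_const_mul]
  rw [reverse_integral a b (fun p => deriv (fun s => X s (v p)))]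

end SigRev

open SigRev in
/-- Time-reversal identity in coefficient form: with `←X_t = X_{a+b-t}`, for any
nonempty word `(i₁,…,i_k)` one has
`Σ_{j=0}^k S(X)^{i₁,…,i_j}_{a,b} · S(←X)^{i_{j+1},…,i_k}_{a,b} = 0`,
expressing that the signature of the time-reversed path is the inverse of the
signature of `X` under the tensor product. -/
theorem sigTerm_time_reversal {d : ℕ} (a b : ℝ) (hab : a ≤ b)
    (X : ℝ → Fin d → ℝ) (hX : ContDiff ℝ 1 X)
    (k : ℕ) (hk : 1 ≤ k) (w : Fin k → Fin d) :
    (∑ j : Fin (k + 1),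
        sigTerm X a b
            (fun i : Fin (j : ℕ) => w ⟨i.1, by have h1 := i.isLt; have h2 := j.isLt; omega⟩) *
          sigTerm (fun t => X (a + b - t)) a b
            (fun i : Fin (k - (j : ℕ)) => w ⟨(j : ℕ) + i.1, by have h1 := i.isLt; omega⟩)) = 0 := by
  have hcoord : ∀ c : Fin d, ContDiff ℝ 1 fun s => X s c := fun c =>
    (ContinuousLinearMap.proj (R := ℝ) (φ := fun _ : Fin d => ℝ) c).contDiff.comp hX
  have step : ∀ j : Fin (k + 1),
      sigTerm X a b
          (fun i : Fin (j : ℕ) => w ⟨i.1, by have h1 := i.isLt; have h2 := j.isLt; omega⟩) *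
        sigTerm (fun t => X (a + b - t)) a b
          (fun i : Fin (k - (j : ℕ)) => w ⟨(j : ℕ) + i.1, by have h1 := i.isLt; omega⟩)
      = (-1 : ℝ) ^ (k - j.1) *
          ∫ u in blocks k j.1 ∩ cube a b k, ∏ i, deriv (fun s => X s (w i)) (u i) := by
    intro j
    have hj : (j : ℕ) ≤ k := by have := j.isLt; omega
    rw [sigTerm_reverse X hX a b]
    rw [show sigTerm X a b
          (fun i : Fin (j : ℕ) => w ⟨i.1, by have h1 := i.isLt; have h2 := j.isLt; omega⟩)
        = ∫ s in monoSet (j : ℕ) ∩ cube a b (j : ℕ),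
            ∏ i : Fin (j : ℕ),
              (fun p => deriv (fun s => X s (w p))) (Fin.castLE hj i) (s i) from rfl]
    rw [mul_left_comm]
    rw [show (∫ t in antiSet (k - (j : ℕ)) ∩ cube a b (k - (j : ℕ)),
          ∏ i : Fin (k - (j : ℕ)),
            deriv (fun s => X s (w ⟨(j : ℕ) + i.1, by have h1 := i.isLt; omega⟩)) (t i))
        = ∫ t in antiSet (k - (j : ℕ)) ∩ cube a b (k - (j : ℕ)),
            ∏ i : Fin (k - (j : ℕ)),
              (fun p => deriv (fun s => X s (w p))) (⟨(j : ℕ) + i.1, by omega⟩ : Fin k) (t i)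
        from rfl]
    rw [prod_reduction a b (fun p => deriv (fun s => X s (w p))) (j : ℕ) hj]
  rw [Finset.sum_congr rfl fun j _ => step j]
  exact sum_integrals hk a b _ fun i => (hcoord (w i)).continuous_deriv le_rfl
end

section
/- (Lévy area of the lead-lag path equals half the quadratic variation) Let N ≥ 1 and let x₀, x₁, …, x_N ∈ ℝ. Define the lead-lag path Z : [0, 2N] → ℝ² as the piecewise linear path through the vertices Z_{2i} = (x_i, x_i) for 0 ≤ i ≤ N and Z_{2i+1} = (x_{i+1}, x_i) for 0 ≤ i ≤ N−1 (linear on each interval [m, m+1], m = 0,…,2N−1; the first coordinate is the lead, the second the lag). Then the first-level iterated integrals satisfy S(Z)^1_{0,2N} = S(Z)^2_{0,2N} = x_N − x₀, and the second-level iterated integrals satisfy S(Z)^{1,2}_{0,2N} − S(Z)^{2,1}_{0,2N} = Σ_{i=0}^{N−1} (x_{i+1} − x_i)², i.e. twice the Lévy area of the lead-lag path equals the quadratic variation QV(x) = Σ_{i=0}^{N−1} (x_{i+1} − x_i)². -/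
open MeasureTheory

/-- The lead-lag path of a sequence `x₀, x₁, …`: the piecewise linear path in
`ℝ²` through the vertices `Z_{2i} = (x_i, x_i)` and `Z_{2i+1} = (x_{i+1}, x_i)`,
linear on each interval `[m, m+1]` (first coordinate: lead, second: lag). -/
noncomputable def leadLagPath (x : ℕ → ℝ) : ℝ → Fin 2 → ℝ := fun t =>
  ![x ((⌊t⌋₊ + 1) / 2), x (⌊t⌋₊ / 2)] +
    (t - (⌊t⌋₊ : ℝ)) •
      (![x ((⌊t⌋₊ + 2) / 2), x ((⌊t⌋₊ + 1) / 2)] - ![x ((⌊t⌋₊ + 1) / 2), x (⌊t⌋₊ / 2)])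

/-! ### Auxiliary definitions -/

/-- The vertices of the lead-lag path. -/
noncomputable def llVtx (x : ℕ → ℝ) (m : ℕ) : Fin 2 → ℝ := ![x ((m + 1) / 2), x (m / 2)]

/-- The slope of coordinate `j` of the lead-lag path on the interval `(m, m+1)`. -/
noncomputable def llSlope (x : ℕ → ℝ) (j : Fin 2) (m : ℕ) : ℝ := llVtx x (m + 1) j - llVtx x m j

/-- A step function, constant equal to `c m` on each interval `(m, m+1)` for `m < L`. -/
noncomputable def stepf (L : ℕ) (c : ℕ → ℝ) : ℝ → ℝ :=
  fun t => ∑ m ∈ Finset.range L, (Set.Ioo (m : ℝ) (m + 1)).indicator (fun _ => c m) t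

/-- The planar simplex region. -/
def Tset (L : ℝ) : Set (ℝ × ℝ) :=
  {p : ℝ × ℝ | p.1 < p.2 ∧ p.1 ∈ Set.Ioo 0 L ∧ p.2 ∈ Set.Ioo 0 L}

theorem Tset_measurable (L : ℝ) : MeasurableSet (Tset L) :=
  (measurableSet_lt measurable_fst measurable_snd).inter
    ((measurable_fst measurableSet_Ioo).inter (measurable_snd measurableSet_Ioo))

/-! ### Step function integrals -/

theorem indicator_integrable (m : ℕ) (r : ℝ) :
    Integrable ((Set.Ioo (m : ℝ) (m + 1)).indicator (fun _ => r)) volume := by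
  rw [integrable_indicator_iff measurableSet_Ioo]
  exact integrableOn_const (by rw [Real.volume_Ioo]; exact ENNReal.ofReal_ne_top)

theorem stepf_integrable (L : ℕ) (c : ℕ → ℝ) : Integrable (stepf L c) volume :=
  integrable_finset_sum _ fun m _ => indicator_integrable m (c m)

theorem integral_indicator_unit {m : ℕ} {s : Set ℝ} (hs : MeasurableSet s)
    (hsub : Set.Ioo (m : ℝ) (m + 1) ⊆ s) (r : ℝ) :
    ∫ t in s, (Set.Ioo (m : ℝ) (m + 1)).indicator (fun _ => r) t = r := by
  rw [setIntegral_indicator measurableSet_Ioo, Set.inter_eq_self_of_subset_right hsub,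
    setIntegral_const, Real.volume_real_Ioo]
  simp

theorem integral_stepf (L : ℕ) (c : ℕ → ℝ) :
    ∫ t in Set.Ioo (0 : ℝ) (L : ℝ), stepf L c t = ∑ m ∈ Finset.range L, c m := by
  unfold stepf
  rw [integral_finset_sum _ fun m _ => (indicator_integrable m (c m)).integrableOn]
  refine Finset.sum_congr rfl fun m hm => ?_
  refine integral_indicator_unit measurableSet_Ioo (Set.Ioo_subset_Ioo (by positivity) ?_) _
  have : (m : ℕ) + 1 ≤ L := Finset.mem_range.1 hm
  exact_mod_cast Nat.cast_le.2 this

set_option maxHeartbeats 1000000 in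
theorem inner_integral (L : ℕ) (c : ℕ → ℝ) {n : ℕ} (hn : n < L) {b : ℝ}
    (hb : b ∈ Set.Ioo (n : ℝ) (n + 1)) :
    ∫ a in Set.Ioo (0 : ℝ) b, stepf L c a
      = (∑ m ∈ Finset.range n, c m) + (b - n) * c n := by
  unfold stepf
  rw [integral_finset_sum _ fun m _ => (indicator_integrable m (c m)).integrableOn]
  have key : ∀ m ∈ Finset.range L,
      (∫ a in Set.Ioo (0 : ℝ) b, (Set.Ioo (m : ℝ) (m + 1)).indicator (fun _ => c m) a)
        = if m < n then c m else if m = n then (b - n) * c n else 0 := by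
    intro m _
    rcases lt_trichotomy m n with hmn | rfl | hmn
    · rw [if_pos hmn]
      refine integral_indicator_unit measurableSet_Ioo
        (Set.Ioo_subset_Ioo (Nat.cast_nonneg m) ?_) _
      have h1 : ((m : ℝ) + 1) ≤ n := by exact_mod_cast Nat.cast_le.2 hmn
      linarith [hb.1]
    · rw [if_neg (lt_irrefl _), if_pos rfl, setIntegral_indicator measurableSet_Ioo]
      have hinter : Set.Ioo (0 : ℝ) b ∩ Set.Ioo (m : ℝ) (m + 1) = Set.Ioo (m : ℝ) b := by
        ext a
        simp only [Set.mem_inter_iff, Set.mem_Ioo]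
        constructor
        · rintro ⟨⟨_, h2⟩, ⟨h3, _⟩⟩; exact ⟨h3, h2⟩
        · rintro ⟨h1, h2⟩
          have hm0 : (0 : ℝ) ≤ m := Nat.cast_nonneg m
          exact ⟨⟨by linarith, h2⟩, ⟨h1, by linarith [hb.2]⟩⟩
      rw [hinter, setIntegral_const,
        Real.volume_real_Ioo_of_le (by linarith [hb.1] : (m:ℝ) ≤ b), smul_eq_mul]
    · rw [if_neg (by omega), if_neg (by omega), setIntegral_indicator measurableSet_Ioo]
      have hinter : Set.Ioo (0 : ℝ) b ∩ Set.Ioo (m : ℝ) (m + 1) = ∅ := by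
        ext a
        simp only [Set.mem_inter_iff, Set.mem_Ioo, Set.mem_empty_iff_false, iff_false, not_and]
        rintro ⟨h1, h2⟩ h3
        have : ((n : ℝ) + 1) ≤ m := by exact_mod_cast Nat.cast_le.2 hmn
        linarith [hb.2]
      rw [hinter, Measure.restrict_empty, integral_zero_measure]
  rw [Finset.sum_congr rfl key,
    ← Finset.sum_subset (Finset.range_subset_range.2 (by omega : n + 1 ≤ L))
      (fun m _ hm => by
        rw [Finset.mem_range, not_lt] at hm
        rw [if_neg (by omega), if_neg (by omega)]),
    Finset.sum_range_succ, if_neg (lt_irrefl _), if_pos rfl]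
  congr 1
  exact Finset.sum_congr rfl fun m hm => if_pos (Finset.mem_range.1 hm)

set_option maxHeartbeats 1000000 in
theorem outer_integral (L : ℕ) (c d : ℕ → ℝ) (hcd : ∀ n, c n * d n = 0) :
    ∫ p in Tset (L : ℝ), stepf L c p.1 * stepf L d p.2
      = ∑ n ∈ Finset.range L, d n * ∑ m ∈ Finset.range n, c m := by
  have hprod : (volume : Measure (ℝ × ℝ)) = (volume : Measure ℝ).prod volume := rfl
  have hint : Integrable (fun p : ℝ × ℝ => stepf L c p.1 * stepf L d p.2)
      ((volume : Measure ℝ).prod volume) :=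
    (stepf_integrable L c).mul_prod (stepf_integrable L d)
  rw [← integral_indicator (Tset_measurable _), hprod,
    integral_prod_symm _ (hint.indicator (Tset_measurable (L : ℝ)))]
  have h1 : ∀ b : ℝ,
      (∫ a, (Tset (L : ℝ)).indicator (fun p => stepf L c p.1 * stepf L d p.2) (a, b))
        = (Set.Ioo (0 : ℝ) (L : ℝ)).indicator
            (fun b' => stepf L d b' * ∫ a in Set.Ioo (0 : ℝ) b', stepf L c a) b := by
    intro b
    by_cases hb : b ∈ Set.Ioo (0 : ℝ) (L : ℝ)
    · rw [Set.indicator_of_mem hb]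
      have hpt : ∀ a : ℝ,
          (Tset (L : ℝ)).indicator (fun p => stepf L c p.1 * stepf L d p.2) (a, b)
            = (Set.Ioo (0 : ℝ) b).indicator (fun a' => stepf L c a' * stepf L d b) a := by
        intro a
        by_cases ha : a ∈ Set.Ioo (0 : ℝ) b
        · rw [Set.indicator_of_mem ha,
            Set.indicator_of_mem (by exact ⟨ha.2, ⟨ha.1, lt_trans ha.2 hb.2⟩, hb⟩)]
        · rw [Set.indicator_of_notMem ha, Set.indicator_of_notMem (by
            intro hmem
            exact ha ⟨hmem.2.1.1, hmem.1⟩)]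
      simp only [hpt]
      rw [integral_indicator measurableSet_Ioo, integral_mul_const, mul_comm]
    · rw [Set.indicator_of_notMem hb]
      have hpt : ∀ a : ℝ,
          (Tset (L : ℝ)).indicator (fun p => stepf L c p.1 * stepf L d p.2) (a, b) = 0 := by
        intro a
        exact Set.indicator_of_notMem (fun hmem => hb hmem.2.2) _
      simp only [hpt, integral_zero]
  simp only [h1]
  rw [integral_indicator measurableSet_Ioo]
  have h2 : ∀ b ∈ Set.Ioo (0 : ℝ) (L : ℝ),
      stepf L d b * (∫ a in Set.Ioo (0 : ℝ) b, stepf L c a)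
        = ∑ n ∈ Finset.range L, (Set.Ioo (n : ℝ) (n + 1)).indicator
            (fun _ => d n * ∑ m ∈ Finset.range n, c m) b := by
    intro b _
    rw [stepf, Finset.sum_mul]
    refine Finset.sum_congr rfl fun n hn => ?_
    by_cases hb' : b ∈ Set.Ioo (n : ℝ) (n + 1)
    · rw [Set.indicator_of_mem hb', Set.indicator_of_mem hb',
        inner_integral L c (Finset.mem_range.1 hn) hb']
      rw [mul_add, show d n * ((b - (n : ℝ)) * c n) = (b - (n : ℝ)) * (c n * d n) from by ring,
        hcd n, mul_zero, add_zero]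
    · rw [Set.indicator_of_notMem hb', Set.indicator_of_notMem hb', zero_mul]
  rw [setIntegral_congr_fun measurableSet_Ioo h2,
    integral_finset_sum _ fun n _ => (indicator_integrable n _).integrableOn]
  refine Finset.sum_congr rfl fun n hn => ?_
  refine integral_indicator_unit measurableSet_Ioo (Set.Ioo_subset_Ioo (Nat.cast_nonneg n) ?_) _
  have : (n : ℕ) + 1 ≤ L := Finset.mem_range.1 hn
  exact_mod_cast Nat.cast_le.2 this

/-! ### Derivative of the lead-lag path -/

theorem leadLag_eq (x : ℕ → ℝ) (s : ℝ) :
    leadLagPath x s = llVtx x ⌊s⌋₊ + (s - (⌊s⌋₊ : ℝ)) • (llVtx x (⌊s⌋₊ + 1) - llVtx x ⌊s⌋₊) := rfl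

theorem deriv_leadLag (x : ℕ → ℝ) (j : Fin 2) (m : ℕ) {t : ℝ}
    (ht : t ∈ Set.Ioo (m : ℝ) (m + 1)) :
    deriv (fun s => leadLagPath x s j) t = llSlope x j m := by
  have hev : (fun s => leadLagPath x s j) =ᶠ[nhds t]
      (fun s => llVtx x m j + (s - (m : ℝ)) * (llVtx x (m + 1) j - llVtx x m j)) := by
    filter_upwards [isOpen_Ioo.mem_nhds ht] with s hs
    have hfl : ⌊s⌋₊ = m := by
      rw [Nat.floor_eq_iff (le_trans (Nat.cast_nonneg m) hs.1.le)]
      exact ⟨hs.1.le, hs.2⟩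
    rw [leadLag_eq, hfl]
    simp
  rw [hev.deriv_eq]
  have hd : HasDerivAt
      (fun s : ℝ => llVtx x m j + (s - (m : ℝ)) * (llVtx x (m + 1) j - llVtx x m j))
      (llVtx x (m + 1) j - llVtx x m j) t := by
    simpa using (((hasDerivAt_id t).sub_const (m : ℝ)).mul_const
      (llVtx x (m + 1) j - llVtx x m j)).const_add (llVtx x m j)
  rw [hd.deriv]
  rfl

theorem natCast_null : (volume : Measure ℝ) (Set.range (Nat.cast : ℕ → ℝ)) = 0 :=
  (Set.countable_range _).measure_zero _

theorem stepf_eq_of_mem (L : ℕ) (c : ℕ → ℝ) {t : ℝ} {m : ℕ} (hm : m < L)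
    (ht : t ∈ Set.Ioo (m : ℝ) (m + 1)) : stepf L c t = c m := by
  unfold stepf
  rw [Finset.sum_eq_single m]
  · exact Set.indicator_of_mem ht _
  · intro k _ hk
    refine Set.indicator_of_notMem (fun htk => hk ?_) _
    have h1 : (k : ℝ) < (m : ℝ) + 1 := htk.1.trans ht.2
    have h2 : (m : ℝ) < (k : ℝ) + 1 := ht.1.trans htk.2
    have h1' : k < m + 1 := by exact_mod_cast h1
    have h2' : m < k + 1 := by exact_mod_cast h2
    omega
  · exact fun h => absurd (Finset.mem_range.2 hm) h

theorem floor_mem_Ioo {t : ℝ} (ht : 0 < t) (hne : t ∉ Set.range (Nat.cast : ℕ → ℝ)) :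
    t ∈ Set.Ioo ((⌊t⌋₊ : ℝ)) ((⌊t⌋₊ : ℝ) + 1) := by
  refine ⟨lt_of_le_of_ne (Nat.floor_le ht.le) ?_, Nat.lt_floor_add_one t⟩
  exact fun h => hne ⟨⌊t⌋₊, h⟩

theorem deriv_eq_stepf (x : ℕ → ℝ) (L : ℕ) (j : Fin 2) {t : ℝ}
    (ht : t ∈ Set.Ioo (0 : ℝ) (L : ℝ)) (hne : t ∉ Set.range (Nat.cast : ℕ → ℝ)) :
    deriv (fun s => leadLagPath x s j) t = stepf L (llSlope x j) t := by
  have hmem := floor_mem_Ioo ht.1 hne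
  have hmL : ⌊t⌋₊ < L := by
    have : (⌊t⌋₊ : ℝ) < (L : ℝ) := lt_of_le_of_lt (Nat.floor_le ht.1.le) ht.2
    exact_mod_cast this
  rw [deriv_leadLag x j ⌊t⌋₊ hmem, stepf_eq_of_mem L _ hmL hmem]

theorem level1 (x : ℕ → ℝ) (L : ℕ) (j : Fin 2) :
    ∫ t in Set.Ioo (0 : ℝ) (L : ℝ), deriv (fun s => leadLagPath x s j) t
      = ∫ t in Set.Ioo (0 : ℝ) (L : ℝ), stepf L (llSlope x j) t := by
  refine setIntegral_congr_ae measurableSet_Ioo ?_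
  filter_upwards [measure_eq_zero_iff_ae_notMem.1 natCast_null] with t hne ht
  exact deriv_eq_stepf x L j ht hne

theorem level2 (x : ℕ → ℝ) (L : ℕ) (j1 j2 : Fin 2) :
    ∫ p in Tset (L : ℝ),
        deriv (fun s => leadLagPath x s j1) p.1 * deriv (fun s => leadLagPath x s j2) p.2
      = ∫ p in Tset (L : ℝ), stepf L (llSlope x j1) p.1 * stepf L (llSlope x j2) p.2 := by
  refine setIntegral_congr_ae (Tset_measurable _) ?_
  have hbad : (volume : Measure (ℝ × ℝ))
      {p : ℝ × ℝ | p.1 ∈ Set.range (Nat.cast : ℕ → ℝ) ∨ p.2 ∈ Set.range (Nat.cast : ℕ → ℝ)}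
        = 0 := by
    refine measure_mono_null (fun p hp => ?_)
      (?_ : (volume : Measure (ℝ × ℝ))
        ((Set.range (Nat.cast : ℕ → ℝ) ×ˢ (Set.univ : Set ℝ)) ∪
         ((Set.univ : Set ℝ) ×ˢ Set.range (Nat.cast : ℕ → ℝ))) = 0)
    · rcases hp with h | h
      · exact Or.inl ⟨h, trivial⟩
      · exact Or.inr ⟨trivial, h⟩
    · refine measure_union_null ?_ ?_
      · rw [show (volume : Measure (ℝ × ℝ)) = (volume : Measure ℝ).prod volume from rfl,
          Measure.prod_prod, natCast_null, zero_mul]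
      · rw [show (volume : Measure (ℝ × ℝ)) = (volume : Measure ℝ).prod volume from rfl,
          Measure.prod_prod, natCast_null, mul_zero]
  filter_upwards [measure_eq_zero_iff_ae_notMem.1 hbad] with p hp hpT
  simp only [Set.mem_setOf_eq, not_or] at hp
  rw [deriv_eq_stepf x L j1 hpT.2.1 hp.1, deriv_eq_stepf x L j2 hpT.2.2 hp.2]

/-! ### Transfer from the pi-type simplex to concrete integrals -/

theorem strictMono_two {t : Fin 2 → ℝ} : StrictMono t ↔ t 0 < t 1 := by
  constructor
  · exact fun h => h (by decide)
  · intro h i j hij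
    fin_cases i <;> fin_cases j <;> first
      | exact absurd hij (by decide)
      | exact h

theorem sig_one {d : ℕ} (X : ℝ → Fin d → ℝ) (L : ℕ) (w : Fin 1 → Fin d) :
    sigTerm X 0 (L : ℝ) w = ∫ t in Set.Ioo (0 : ℝ) (L : ℝ), deriv (fun s => X s (w 0)) t := by
  unfold sigTerm
  erw [← ((volume_preserving_funUnique (Fin 1) ℝ).symm _).setIntegral_preimage_emb
    (MeasurableEquiv.measurableEmbedding _)]
  have hset : (⇑(MeasurableEquiv.funUnique (Fin 1) ℝ).symm) ⁻¹'
      {t : Fin 1 → ℝ | StrictMono t ∧ ∀ i, t i ∈ Set.Ioo (0 : ℝ) (L : ℝ)}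
      = Set.Ioo (0 : ℝ) (L : ℝ) := by
    ext r
    simp [MeasurableEquiv.funUnique, Equiv.funUnique, Subsingleton.strictMono]
  rw [hset]
  apply setIntegral_congr_fun measurableSet_Ioo
  intro r _
  simp [MeasurableEquiv.funUnique, Equiv.funUnique, Fin.prod_univ_one]

theorem sig_two (X : ℝ → Fin 2 → ℝ) (L : ℕ) (w : Fin 2 → Fin 2) :
    sigTerm X 0 (L : ℝ) w
      = ∫ p in Tset (L : ℝ),
          deriv (fun s => X s (w 0)) p.1 * deriv (fun s => X s (w 1)) p.2 := by
  unfold sigTerm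
  rw [← ((volume_preserving_finTwoArrow ℝ).symm _).setIntegral_preimage_emb
    (MeasurableEquiv.measurableEmbedding _)]
  have hset : (⇑(MeasurableEquiv.finTwoArrow (α := ℝ)).symm) ⁻¹'
      {t : Fin 2 → ℝ | StrictMono t ∧ ∀ i, t i ∈ Set.Ioo (0 : ℝ) (L : ℝ)}
      = Tset (L : ℝ) := by
    ext p
    simp [MeasurableEquiv.finTwoArrow, strictMono_two, Fin.forall_fin_two, Tset]
  rw [hset]
  apply setIntegral_congr_fun (Tset_measurable _)
  intro p _
  simp [MeasurableEquiv.finTwoArrow, Fin.prod_univ_two]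

/-! ### Arithmetic -/

theorem sum_llSlope (x : ℕ → ℝ) (j : Fin 2) (n : ℕ) :
    ∑ m ∈ Finset.range n, llSlope x j m = llVtx x n j - llVtx x 0 j :=
  Finset.sum_range_sub (fun k => llVtx x k j) n

theorem llSlope_mul (x : ℕ → ℝ) (n : ℕ) : llSlope x 0 n * llSlope x 1 n = 0 := by
  rcases Nat.even_or_odd n with ⟨k, rfl⟩ | ⟨k, rfl⟩
  · have e1 : (k + k + 1) / 2 = k := by omega
    have e2 : (k + k) / 2 = k := by omega
    simp [llSlope, llVtx, e1, e2]
  · have e1 : (2 * k + 1 + 1 + 1) / 2 = k + 1 := by omega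
    have e2 : (2 * k + 1 + 1) / 2 = k + 1 := by omega
    simp [llSlope, llVtx, e1, e2]

theorem parity_sum (x : ℕ → ℝ) (N : ℕ) :
    ∑ n ∈ Finset.range (2 * N),
        (llSlope x 1 n * (llVtx x n 0 - x 0) - llSlope x 0 n * (llVtx x n 1 - x 0))
      = ∑ i ∈ Finset.range N, (x (i + 1) - x i) ^ 2 := by
  induction N with
  | zero => simp
  | succ k ih =>
    rw [show 2 * (k + 1) = 2 * k + 1 + 1 from by omega, Finset.sum_range_succ,
      Finset.sum_range_succ, ih, Finset.sum_range_succ]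
    have e1 : (2 * k + 1) / 2 = k := by omega
    have e2 : (2 * k) / 2 = k := by omega
    have e3 : (2 * k + 1 + 1) / 2 = k + 1 := by omega
    have e4 : (2 * k + 1 + 1 + 1) / 2 = k + 1 := by omega
    have e5 : (2 * k + 1 + 1 + 1 + 1) / 2 = k + 2 := by omega
    simp only [llSlope, llVtx, Matrix.cons_val_zero, Matrix.cons_val_one, Matrix.head_cons,
      e1, e2, e3, e4]
    ring

/-! ### Main theorem -/

set_option maxHeartbeats 1000000 in
/-- The Lévy area of the lead-lag path equals half the quadratic variation. -/
theorem leadLag_levyArea_eq_quadraticVariation (N : ℕ) (hN : 1 ≤ N) (x : ℕ → ℝ) :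
    sigTerm (leadLagPath x) 0 (2 * N) ![0] = x N - x 0 ∧
    sigTerm (leadLagPath x) 0 (2 * N) ![1] = x N - x 0 ∧
    sigTerm (leadLagPath x) 0 (2 * N) ![0, 1] - sigTerm (leadLagPath x) 0 (2 * N) ![1, 0]
      = ∑ i ∈ Finset.range N, (x (i + 1) - x i) ^ 2 := by
  have hcast : (2 : ℝ) * (N : ℝ) = ((2 * N : ℕ) : ℝ) := by push_cast; ring
  have eN1 : (2 * N + 1) / 2 = N := by omega
  have eN2 : (2 * N) / 2 = N := by omega
  refine ⟨?_, ?_, ?_⟩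
  · rw [hcast, sig_one, level1, integral_stepf, sum_llSlope]
    simp [llVtx, eN1]
  · rw [hcast, sig_one, level1, integral_stepf, sum_llSlope]
    simp [llVtx, eN2]
  · rw [hcast, sig_two, sig_two]
    have hw1 : (![0, 1] : Fin 2 → Fin 2) 0 = 0 := rfl
    have hw2 : (![0, 1] : Fin 2 → Fin 2) 1 = 1 := rfl
    have hw3 : (![1, 0] : Fin 2 → Fin 2) 0 = 1 := rfl
    have hw4 : (![1, 0] : Fin 2 → Fin 2) 1 = 0 := rfl
    rw [hw1, hw2, hw3, hw4, level2, level2,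
      outer_integral (2 * N) (llSlope x 0) (llSlope x 1) (llSlope_mul x),
      outer_integral (2 * N) (llSlope x 1) (llSlope x 0)
        (fun n => by rw [mul_comm]; exact llSlope_mul x n),
      ← Finset.sum_sub_distrib]
    rw [← parity_sum x N]
    refine Finset.sum_congr rfl fun n _ => ?_
    rw [sum_llSlope, sum_llSlope]
    have h0 : llVtx x 0 0 = x 0 := rfl
    have h1 : llVtx x 0 1 = x 0 := rfl
    rw [h0, h1]
end

section
/- (Second-level signature of the cumulative-sum lead-lag embedding) Let N ≥ 1 and x₁, …, x_N ∈ ℝ. Define the cumulative sums x̃₀ = 0 and x̃_i = x₁ + ⋯ + x_i for 1 ≤ i ≤ N, and let Z : [0, 2N] → ℝ² be the lead-lag path of (x̃₀,…,x̃_N): the piecewise linear path through Z_{2i} = (x̃_i, x̃_i) for 0 ≤ i ≤ N and Z_{2i+1} = (x̃_{i+1}, x̃_i) for 0 ≤ i ≤ N−1, linear on each [m, m+1]. Then: S(Z)^1_{0,2N} = S(Z)^2_{0,2N} = Σ_{i=1}^N x_i; S(Z)^{1,1}_{0,2N} = S(Z)^{2,2}_{0,2N} = ½(Σ_{i=1}^N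 x_i)²; S(Z)^{1,2}_{0,2N} = ½[(Σ_{i=1}^N x_i)² + Σ_{i=1}^N x_i²]; and S(Z)^{2,1}_{0,2N} = ½[(Σ_{i=1}^N x_i)² − Σ_{i=1}^N x_i²]. -/
open MeasureTheory Set

noncomputable def vA (x : ℕ → ℝ) (m : ℕ) : Fin 2 → ℝ := ![x ((m+1)/2), x (m/2)]
noncomputable def slp (x : ℕ → ℝ) (m : ℕ) (j : Fin 2) : ℝ := vA x (m+1) j - vA x m j
noncomputable def aff (x : ℕ → ℝ) (m : ℕ) (j : Fin 2) (t : ℝ) : ℝ := vA x m j + (t - m) * slp x m j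
noncomputable def Df (x : ℕ → ℝ) (j : Fin 2) (t : ℝ) : ℝ := slp x ⌊t⌋₊ j

lemma ll_eq_aff {x : ℕ → ℝ} {t : ℝ} {m : ℕ} (h : ⌊t⌋₊ = m) (j : Fin 2) :
    leadLagPath x t j = aff x m j t := by
  subst h
  fin_cases j <;>
    simp only [leadLagPath, aff, vA, slp, Pi.add_apply, Pi.smul_apply, Pi.sub_apply, smul_eq_mul,
      Matrix.cons_val_zero, Matrix.cons_val_one, Matrix.head_cons, Fin.isValue] <;>
    ring



variable {x : ℕ → ℝ}

lemma hasDerivAt_aff (m : ℕ) (j : Fin 2) (t : ℝ) :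
    HasDerivAt (aff x m j) (slp x m j) t := by
  unfold aff
  simpa using (((hasDerivAt_id t).sub_const (m : ℝ)).mul_const (slp x m j)).const_add (vA x m j)

lemma floor_mem (t : ℝ) (m : ℕ) (h1 : (m:ℝ) ≤ t) (h2 : t < m + 1) : ⌊t⌋₊ = m := by
  rw [Nat.floor_eq_iff (le_trans (Nat.cast_nonneg m) h1)]
  exact ⟨h1, by exact_mod_cast h2⟩

lemma ll_eq_aff_Icc {t : ℝ} {m : ℕ} (h1 : (m:ℝ) ≤ t) (h2 : t ≤ m + 1) (j : Fin 2) :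
    leadLagPath x t j = aff x m j t := by
  rcases lt_or_eq_of_le h2 with h2 | h2
  · exact ll_eq_aff (floor_mem t m h1 h2) j
  · have hm1 : ⌊t⌋₊ = m + 1 := by
      rw [h2]; exact_mod_cast Nat.floor_natCast (m+1)
    rw [ll_eq_aff hm1 j, h2]
    simp only [aff, vA, slp]
    push_cast
    ring

lemma hasDerivAt_ll {t : ℝ} (ht : t ∉ Set.range (Nat.cast : ℕ → ℝ)) (j : Fin 2) :
    HasDerivAt (fun s => leadLagPath x s j) (Df x j t) t := by
  rcases lt_or_ge t 0 with h0 | h0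
  · have hfl : ⌊t⌋₊ = 0 := Nat.floor_eq_zero.2 (h0.trans zero_lt_one)
    have hev : (fun s => leadLagPath x s j) =ᶠ[nhds t] aff x 0 j := by
      filter_upwards [Iio_mem_nhds (show t < (1:ℝ) from h0.trans zero_lt_one)] with s hs
      exact ll_eq_aff (Nat.floor_eq_zero.2 hs) j
    rw [show Df x j t = slp x 0 j by rw [Df, hfl]]
    exact (hasDerivAt_aff 0 j t).congr_of_eventuallyEq hev
  · set m := ⌊t⌋₊ with hm
    have h1 : (m:ℝ) ≤ t := Nat.floor_le h0
    have h1' : (m:ℝ) < t := lt_of_le_of_ne h1 (by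
      intro h; exact ht ⟨m, h⟩)
    have h2 : t < m + 1 := Nat.lt_floor_add_one t
    have hev : (fun s => leadLagPath x s j) =ᶠ[nhds t] aff x m j := by
      filter_upwards [Ioo_mem_nhds h1' h2] with s hs
      exact ll_eq_aff (floor_mem s m hs.1.le hs.2) j
    exact (hasDerivAt_aff m j t).congr_of_eventuallyEq hev

lemma deriv_ll_ae (j : Fin 2) :
    (fun t => deriv (fun s => leadLagPath x s j) t) =ᵐ[volume] Df x j := by
  have hc : (Set.range (Nat.cast : ℕ → ℝ)).Countable := Set.countable_range _
  filter_upwards [hc.ae_notMem volume] with t ht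
  exact (hasDerivAt_ll ht j).deriv

lemma hasDerivWithinAt_ll {t : ℝ} (ht : 0 ≤ t) (j : Fin 2) :
    HasDerivWithinAt (fun s => leadLagPath x s j) (Df x j t) (Set.Ioi t) t := by
  set m := ⌊t⌋₊ with hm
  have h1 : (m:ℝ) ≤ t := Nat.floor_le ht
  have h2 : t < m + 1 := Nat.lt_floor_add_one t
  have hev : (fun s => leadLagPath x s j) =ᶠ[nhdsWithin t (Set.Ioi t)] aff x m j := by
    filter_upwards [Ioo_mem_nhdsGT_of_mem (Set.left_mem_Ico.2 h2)] with s hs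
    exact ll_eq_aff (floor_mem s m (h1.trans hs.1.le) hs.2) j
  exact ((hasDerivAt_aff m j t).hasDerivWithinAt).congr_of_eventuallyEq hev
    (ll_eq_aff_Icc h1 h2.le j)

lemma continuousOn_ll (M : ℕ) (j : Fin 2) :
    ContinuousOn (fun s => leadLagPath x s j) (Set.Icc 0 (M:ℝ)) := by
  induction M with
  | zero =>
    simp only [Nat.cast_zero, Set.Icc_self]
    intro t ht
    simp only [Set.mem_singleton_iff] at ht
    subst ht
    exact continuousWithinAt_singleton
  | succ n ih =>
    have hU : Set.Icc (0:ℝ) ((n+1:ℕ):ℝ) = Set.Icc (0:ℝ) (n:ℝ) ∪ Set.Icc (n:ℝ) ((n+1:ℕ):ℝ) := by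
      rw [Set.Icc_union_Icc_eq_Icc (Nat.cast_nonneg n) (by exact_mod_cast Nat.le_succ n)]
    rw [hU]
    have hpiece : ContinuousOn (fun s => leadLagPath x s j) (Set.Icc (n:ℝ) ((n+1:ℕ):ℝ)) := by
      have haff : Continuous (aff x n j) := by
        unfold aff
        exact continuous_const.add ((continuous_id.sub continuous_const).mul continuous_const)
      refine haff.continuousOn.congr ?_
      intro s hs
      exact ll_eq_aff_Icc hs.1 (by exact_mod_cast hs.2) j
    intro p hp
    rcases hp with hp | hp
    · refine ContinuousWithinAt.union (ih p hp) ?_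
      rcases em (p ∈ Set.Icc (n:ℝ) ((n+1:ℕ):ℝ)) with h | h
      · exact hpiece p h
      · exact continuousWithinAt_of_notMem_closure (by rwa [IsClosed.closure_eq isClosed_Icc])
    · refine ContinuousWithinAt.union ?_ (hpiece p hp)
      rcases em (p ∈ Set.Icc (0:ℝ) (n:ℝ)) with h | h
      · exact ih p h
      · exact continuousWithinAt_of_notMem_closure (by rwa [IsClosed.closure_eq isClosed_Icc])

lemma measurable_Df (j : Fin 2) : Measurable (Df x j) := by
  have : Df x j = (fun n : ℕ => slp x n j) ∘ Nat.floor := rfl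
  rw [this]
  exact measurable_from_top.comp Nat.measurable_floor

lemma integrableOn_Df_Icc (a b : ℝ) (j : Fin 2) :
    IntegrableOn (Df x j) (Set.Icc a b) volume := by
  set M : ℝ := ∑ n ∈ Finset.range (⌊b⌋₊ + 1), |slp x n j| with hM
  apply Measure.integrableOn_of_bounded (M := M) measure_Icc_lt_top.ne
    (measurable_Df j).aestronglyMeasurable
  refine (ae_restrict_mem measurableSet_Icc).mono fun t ht => ?_
  have h1 : ⌊t⌋₊ ∈ Finset.range (⌊b⌋₊ + 1) := by
    simp only [Finset.mem_range, Nat.lt_succ_iff]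
    exact Nat.floor_le_floor ht.2
  calc ‖Df x j t‖ = |slp x ⌊t⌋₊ j| := rfl
    _ ≤ M := Finset.single_le_sum (f := fun n => |slp x n j|) (fun n _ => abs_nonneg _) h1

lemma intervalIntegrable_Df (u v : ℝ) (j : Fin 2) :
    IntervalIntegrable (Df x j) volume u v := by
  rw [intervalIntegrable_iff]
  exact (integrableOn_Df_Icc (min u v) (max u v) j).mono_set Set.Ioc_subset_Icc_self

lemma integral_Df {u v : ℝ} (hu : 0 ≤ u) (huv : u ≤ v) (j : Fin 2) :
    ∫ t in u..v, Df x j t = leadLagPath x v j - leadLagPath x u j := by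
  apply intervalIntegral.integral_eq_sub_of_hasDeriv_right_of_le huv ?_ ?_
    (intervalIntegrable_Df u v j)
  · exact (continuousOn_ll ⌈v⌉₊ j).mono (Set.Icc_subset_Icc hu (Nat.le_ceil v))
  · exact fun t ht => hasDerivWithinAt_ll (hu.trans ht.1.le) j

lemma ll_nat (m : ℕ) (j : Fin 2) : leadLagPath x (m:ℝ) j = vA x m j := by
  rw [ll_eq_aff (Nat.floor_natCast m) j]
  simp [aff]

lemma sig_one_s13 {T : ℝ} (hT : 0 ≤ T) (j : Fin 2) :
    sigTerm (leadLagPath x) 0 T ![j] = leadLagPath x T j - leadLagPath x 0 j := by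
  set A : Set (Fin 1 → ℝ) := {t | StrictMono t ∧ ∀ i, t i ∈ Set.Ioo 0 T} with hA
  have himg : (MeasurableEquiv.funUnique (Fin 1) ℝ) '' A = Set.Ioo 0 T := by
    ext r
    simp only [Set.mem_image]
    constructor
    · rintro ⟨t, ⟨-, h⟩, rfl⟩
      exact h 0
    · intro hr
      exact ⟨fun _ => r, ⟨Subsingleton.strictMono _, fun _ => hr⟩, rfl⟩
  have key := (volume_preserving_funUnique (Fin 1) ℝ).setIntegral_image_emb
    (MeasurableEquiv.funUnique (Fin 1) ℝ).measurableEmbedding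
    (fun r => deriv (fun s => leadLagPath x s j) r) A
  have hfun : (fun t : Fin 1 → ℝ => ∏ i, deriv (fun s => leadLagPath x s (![j] i)) (t i))
      = fun t => deriv (fun s => leadLagPath x s j)
          ((MeasurableEquiv.funUnique (Fin 1) ℝ) t) := by
    funext t
    rw [Fin.prod_univ_one]
    rfl
  have hsig : sigTerm (leadLagPath x) 0 T ![j]
      = ∫ r in (MeasurableEquiv.funUnique (Fin 1) ℝ) '' A, deriv (fun s => leadLagPath x s j) r := by
    rw [key]
    unfold sigTerm
    rw [hfun]
    rfl
  rw [hsig, himg]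
  have hae : ∀ᵐ t ∂(volume.restrict (Set.Ioo (0:ℝ) T)),
      deriv (fun s => leadLagPath x s j) t = Df x j t :=
    ae_restrict_of_ae (deriv_ll_ae j)
  rw [integral_congr_ae hae, ← integral_Ioc_eq_integral_Ioo,
    ← intervalIntegral.integral_of_le hT]
  exact integral_Df le_rfl hT j

lemma strictMono_fin_two {t : Fin 2 → ℝ} (h : t 0 < t 1) : StrictMono t := by
  intro i k hik
  fin_cases i <;> fin_cases k <;>
    first
      | exact h
      | exact absurd hik (by decide)

lemma sig_two_s13 {T : ℝ} (hT : 0 ≤ T) (j0 j1 : Fin 2) :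
    sigTerm (leadLagPath x) 0 T ![j0, j1]
      = ∫ t in Set.Ioo 0 T, Df x j0 t * (leadLagPath x T j1 - leadLagPath x t j1) := by
  set S : Set (ℝ × ℝ) := {p | p.1 < p.2} ∩ (Set.Ioo 0 T ×ˢ Set.Ioo 0 T) with hS
  have hSm : MeasurableSet S := (measurableSet_lt measurable_fst measurable_snd).inter
    (measurableSet_Ioo.prod measurableSet_Ioo)
  set A : Set (Fin 2 → ℝ) := {t | StrictMono t ∧ ∀ i, t i ∈ Set.Ioo 0 T} with hA
  have himg : (MeasurableEquiv.finTwoArrow : (Fin 2 → ℝ) ≃ᵐ ℝ × ℝ) '' A = S := by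
    ext p
    simp only [Set.mem_image]
    constructor
    · rintro ⟨t, ⟨hmono, hio⟩, rfl⟩
      exact ⟨hmono (by decide : (0 : Fin 2) < 1), hio 0, hio 1⟩
    · rintro ⟨h01, h0, h1⟩
      refine ⟨![p.1, p.2], ⟨strictMono_fin_two (by simpa using h01), fun i => ?_⟩, ?_⟩
      · fin_cases i <;> simpa
      · rfl
  have key := (volume_preserving_finTwoArrow ℝ).setIntegral_image_emb
    (MeasurableEquiv.finTwoArrow (α := ℝ)).measurableEmbedding
    (fun p : ℝ × ℝ => deriv (fun s => leadLagPath x s j0) p.1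
      * deriv (fun s => leadLagPath x s j1) p.2) A
  have hfun : (fun t : Fin 2 → ℝ => ∏ i, deriv (fun s => leadLagPath x s (![j0, j1] i)) (t i))
      = fun t => deriv (fun s => leadLagPath x s j0) (t 0)
          * deriv (fun s => leadLagPath x s j1) (t 1) := by
    funext t
    rw [Fin.prod_univ_two]
    rfl
  have hsig : sigTerm (leadLagPath x) 0 T ![j0, j1]
      = ∫ p in S, deriv (fun s => leadLagPath x s j0) p.1
          * deriv (fun s => leadLagPath x s j1) p.2 := by
    rw [← himg, key]
    unfold sigTerm
    rw [hfun]
    rfl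
  rw [hsig]
  have hae : ∀ᵐ p : ℝ × ℝ ∂(volume.restrict S),
      deriv (fun s => leadLagPath x s j0) p.1 * deriv (fun s => leadLagPath x s j1) p.2
        = Df x j0 p.1 * Df x j1 p.2 := by
    apply ae_restrict_of_ae
    rw [Measure.volume_eq_prod ℝ ℝ]
    filter_upwards [Measure.quasiMeasurePreserving_fst.ae (deriv_ll_ae (x := x) j0),
      Measure.quasiMeasurePreserving_snd.ae (deriv_ll_ae (x := x) j1)] with p h1 h2
    rw [h1, h2]
  rw [integral_congr_ae hae]
  have hIoo : IntegrableOn (fun p : ℝ × ℝ => Df x j0 p.1 * Df x j1 p.2)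
      (Set.Ioo 0 T ×ˢ Set.Ioo 0 T) (volume.prod volume) := by
    rw [IntegrableOn, ← Measure.prod_restrict]
    exact Integrable.mul_prod
      ((integrableOn_Df_Icc 0 T j0).mono_set Set.Ioo_subset_Icc_self)
      ((integrableOn_Df_Icc 0 T j1).mono_set Set.Ioo_subset_Icc_self)
  have hint : Integrable (S.indicator fun p : ℝ × ℝ => Df x j0 p.1 * Df x j1 p.2)
      (volume.prod volume) := by
    rw [integrable_indicator_iff hSm]
    exact hIoo.mono_set Set.inter_subset_right
  have hinner : ∀ a : ℝ, (∫ b, S.indicator (fun p : ℝ × ℝ => Df x j0 p.1 * Df x j1 p.2) (a, b))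
      = (Set.Ioo (0:ℝ) T).indicator
          (fun a => Df x j0 a * (leadLagPath x T j1 - leadLagPath x a j1)) a := by
    intro a
    by_cases ha : a ∈ Set.Ioo (0:ℝ) T
    · have hfb : (fun b => S.indicator (fun p : ℝ × ℝ => Df x j0 p.1 * Df x j1 p.2) (a, b))
          = (Set.Ioo a T).indicator (fun b => Df x j0 a * Df x j1 b) := by
        funext b
        by_cases hb : b ∈ Set.Ioo a T
        · rw [Set.indicator_of_mem hb, Set.indicator_of_mem]
          exact ⟨hb.1, ha, ha.1.trans hb.1, hb.2⟩
        · rw [Set.indicator_of_notMem hb, Set.indicator_of_notMem]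
          intro hmem
          exact hb ⟨hmem.1, hmem.2.2.2⟩
      rw [hfb, integral_indicator measurableSet_Ioo, Set.indicator_of_mem ha,
        integral_const_mul]
      congr 1
      rw [← integral_Ioc_eq_integral_Ioo, ← intervalIntegral.integral_of_le ha.2.le]
      exact integral_Df ha.1.le ha.2.le j1
    · rw [Set.indicator_of_notMem ha]
      have hfb : (fun b => S.indicator (fun p : ℝ × ℝ => Df x j0 p.1 * Df x j1 p.2) (a, b))
          = fun _ => (0:ℝ) := by
        funext b
        rw [Set.indicator_of_notMem]
        intro hmem
        exact ha hmem.2.1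
      rw [hfb, integral_zero]
  calc ∫ p in S, Df x j0 p.1 * Df x j1 p.2
      = ∫ p, S.indicator (fun p : ℝ × ℝ => Df x j0 p.1 * Df x j1 p.2) p := by
        rw [integral_indicator hSm]
    _ = ∫ a, ∫ b, S.indicator (fun p : ℝ × ℝ => Df x j0 p.1 * Df x j1 p.2) (a, b) := by
        rw [Measure.volume_eq_prod ℝ ℝ]
        exact integral_prod _ hint
    _ = ∫ a, (Set.Ioo (0:ℝ) T).indicator
          (fun a => Df x j0 a * (leadLagPath x T j1 - leadLagPath x a j1)) a := by
        exact integral_congr_ae (Filter.Eventually.of_forall hinner)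
    _ = ∫ t in Set.Ioo 0 T, Df x j0 t * (leadLagPath x T j1 - leadLagPath x t j1) := by
        rw [integral_indicator measurableSet_Ioo]

lemma measurable_ll (j : Fin 2) : Measurable (fun t => leadLagPath x t j) := by
  have : (fun t => leadLagPath x t j)
      = fun t => vA x ⌊t⌋₊ j + (t - (⌊t⌋₊ : ℝ)) * slp x ⌊t⌋₊ j := by
    funext t
    exact ll_eq_aff rfl j
  rw [this]
  have h1 : Measurable fun t : ℝ => vA x ⌊t⌋₊ j := by
    have : (fun t : ℝ => vA x ⌊t⌋₊ j) = (fun n : ℕ => vA x n j) ∘ Nat.floor := rfl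
    rw [this]; exact measurable_from_top.comp Nat.measurable_floor
  have h2 : Measurable fun t : ℝ => slp x ⌊t⌋₊ j := by
    have : (fun t : ℝ => slp x ⌊t⌋₊ j) = (fun n : ℕ => slp x n j) ∘ Nat.floor := rfl
    rw [this]; exact measurable_from_top.comp Nat.measurable_floor
  have h3 : Measurable fun t : ℝ => ((⌊t⌋₊ : ℝ)) := by
    have : (fun t : ℝ => ((⌊t⌋₊ : ℝ))) = (fun n : ℕ => (n : ℝ)) ∘ Nat.floor := rfl
    rw [this]; exact measurable_from_top.comp Nat.measurable_floor
  exact h1.add (((measurable_id.sub h3)).mul h2)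

lemma ae_piece (m : ℕ) (j0 j1 : Fin 2) (C : ℝ) :
    ∀ᵐ t : ℝ ∂volume, t ∈ Set.uIoc (m:ℝ) ((m:ℝ)+1) →
      Df x j0 t * (C - leadLagPath x t j1)
        = slp x m j0 * (C - aff x m j1 t) := by
  filter_upwards [(Set.countable_singleton ((m:ℝ)+1)).ae_notMem volume] with t ht hmem
  rw [Set.uIoc_of_le (by linarith [Nat.cast_nonneg (α := ℝ) m] : (m:ℝ) ≤ (m:ℝ)+1)] at hmem
  have htlt : t < (m:ℝ) + 1 := lt_of_le_of_ne hmem.2 (by simpa using ht)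
  have hfl : ⌊t⌋₊ = m := floor_mem t m hmem.1.le htlt
  rw [ll_eq_aff hfl j1]
  unfold Df
  rw [hfl]

lemma piece_integrable (m : ℕ) (j0 j1 : Fin 2) (C : ℝ) :
    IntervalIntegrable (fun t => Df x j0 t * (C - leadLagPath x t j1)) volume
      (m:ℝ) ((m:ℝ)+1) := by
  have hcont : Continuous fun t => slp x m j0 * (C - aff x m j1 t) := by
    unfold aff
    fun_prop
  have hii := hcont.intervalIntegrable (μ := volume) (m:ℝ) ((m:ℝ)+1)
  rw [intervalIntegrable_iff] at hii ⊢
  apply hii.congr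
  rw [Filter.EventuallyEq, ae_restrict_iff' measurableSet_uIoc]
  filter_upwards [ae_piece m j0 j1 C] with t h1 h2
  exact (h1 h2).symm

lemma piece_eval (m : ℕ) (j0 j1 : Fin 2) (C : ℝ) :
    ∫ t in (m:ℝ)..((m:ℝ)+1), Df x j0 t * (C - leadLagPath x t j1)
      = slp x m j0 * (C - vA x m j1 - slp x m j1 / 2) := by
  rw [intervalIntegral.integral_congr_ae (ae_piece m j0 j1 C)]
  have hexp : (fun t => slp x m j0 * (C - aff x m j1 t))
      = fun t => (slp x m j0 * (C - vA x m j1) + slp x m j0 * slp x m j1 * m)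
          - (slp x m j0 * slp x m j1) * t := by
    funext t
    unfold aff
    ring
  rw [hexp]
  rw [intervalIntegral.integral_sub intervalIntegrable_const
    (intervalIntegral.intervalIntegrable_id.const_mul _),
    intervalIntegral.integral_const, intervalIntegral.integral_const_mul,
    _root_.integral_id]
  simp only [smul_eq_mul]
  ring

lemma J_eval (K : ℕ) (j0 j1 : Fin 2) (C : ℝ) :
    ∫ t in Set.Ioo (0:ℝ) ((K:ℕ):ℝ), Df x j0 t * (C - leadLagPath x t j1)
      = ∑ m ∈ Finset.range K, slp x m j0 * (C - vA x m j1 - slp x m j1 / 2) := by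
  rw [← integral_Ioc_eq_integral_Ioo,
    ← intervalIntegral.integral_of_le (by exact_mod_cast Nat.cast_nonneg K)]
  have hsum := intervalIntegral.sum_integral_adjacent_intervals
    (a := fun k : ℕ => (k:ℝ)) (μ := volume) (n := K)
    (f := fun t => Df x j0 t * (C - leadLagPath x t j1)) ?_
  · rw [Nat.cast_zero] at hsum
    rw [← hsum]
    apply Finset.sum_congr rfl
    intro m _
    rw [show ((m+1:ℕ):ℝ) = (m:ℝ)+1 by push_cast; ring]
    exact piece_eval m j0 j1 C
  · intro k _
    rw [show ((k+1:ℕ):ℝ) = (k:ℝ)+1 by push_cast; ring]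
    exact piece_integrable k j0 j1 C

lemma sum_range_two_mul (K : ℕ) (f : ℕ → ℝ) :
    ∑ m ∈ Finset.range (2*K), f m = ∑ i ∈ Finset.range K, (f (2*i) + f (2*i+1)) := by
  induction K with
  | zero => simp
  | succ n ih =>
    rw [show 2*(n+1) = 2*n+1+1 by ring, Finset.sum_range_succ, Finset.sum_range_succ, ih,
      Finset.sum_range_succ]
    ring

lemma sig_two_eval (N : ℕ) (j0 j1 : Fin 2) :
    sigTerm (leadLagPath x) 0 ((2*N:ℕ):ℝ) ![j0, j1]
      = ∑ i ∈ Finset.range N,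
          (slp x (2*i) j0 * (vA x (2*N) j1 - vA x (2*i) j1 - slp x (2*i) j1 / 2)
           + slp x (2*i+1) j0 * (vA x (2*N) j1 - vA x (2*i+1) j1 - slp x (2*i+1) j1 / 2)) := by
  rw [sig_two_s13 (Nat.cast_nonneg _) j0 j1]
  simp only [ll_nat (x := x) (2*N) j1]
  rw [J_eval (2*N) j0 j1 _, sum_range_two_mul]



/-- Second-level signature of the cumulative-sum lead-lag embedding: with
`x̃_i = x₁ + ⋯ + x_i` (and `x̃₀ = 0`) and `Z` the lead-lag path of
`x̃₀,…,x̃_N`, one has `S^1 = S^2 = Σ x_i`, `S^{1,1} = S^{2,2} = ½(Σ x_i)²`,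
`S^{1,2} = ½((Σ x_i)² + Σ x_i²)` and `S^{2,1} = ½((Σ x_i)² − Σ x_i²)`. -/
theorem cumsum_leadLag_signature_level_two (N : ℕ) (hN : 1 ≤ N) (x : ℕ → ℝ) :
    let Z := leadLagPath fun i => ∑ j ∈ Finset.range i, x (j + 1)
    sigTerm Z 0 (2 * N) ![0] = ∑ i ∈ Finset.range N, x (i + 1) ∧
    sigTerm Z 0 (2 * N) ![1] = ∑ i ∈ Finset.range N, x (i + 1) ∧
    sigTerm Z 0 (2 * N) ![0, 0] = (∑ i ∈ Finset.range N, x (i + 1)) ^ 2 / 2 ∧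
    sigTerm Z 0 (2 * N) ![1, 1] = (∑ i ∈ Finset.range N, x (i + 1)) ^ 2 / 2 ∧
    sigTerm Z 0 (2 * N) ![0, 1]
      = ((∑ i ∈ Finset.range N, x (i + 1)) ^ 2 + ∑ i ∈ Finset.range N, x (i + 1) ^ 2) / 2 ∧
    sigTerm Z 0 (2 * N) ![1, 0]
      = ((∑ i ∈ Finset.range N, x (i + 1)) ^ 2 - ∑ i ∈ Finset.range N, x (i + 1) ^ 2) / 2 := by
  intro Z
  set y : ℕ → ℝ := fun i => ∑ j ∈ Finset.range i, x (j + 1) with hy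
  have hy0 : y 0 = 0 := by simp [hy]
  have hystep : ∀ i, y (i + 1) = y i + x (i + 1) := fun i => Finset.sum_range_succ _ i
  have hcast : (2 * (N:ℝ)) = ((2*N : ℕ):ℝ) := by push_cast; ring
  have hvA_even0 : ∀ i, vA y (2*i) 0 = y i := by
    intro i; unfold vA; rw [show (2*i+1)/2 = i by omega]; simp
  have hvA_even1 : ∀ i, vA y (2*i) 1 = y i := by
    intro i; unfold vA; rw [show (2*i)/2 = i by omega]; simp
  have hvA_odd0 : ∀ i, vA y (2*i+1) 0 = y (i+1) := by
    intro i; unfold vA; rw [show (2*i+1+1)/2 = i+1 by omega]; simp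
  have hvA_odd1 : ∀ i, vA y (2*i+1) 1 = y i := by
    intro i; unfold vA; rw [show (2*i+1)/2 = i by omega]; simp
  have hslp_even0 : ∀ i, slp y (2*i) 0 = y (i+1) - y i := by
    intro i; unfold slp
    rw [show (2*i : ℕ)+1 = 2*i+1 from rfl, hvA_odd0, hvA_even0]
  have hslp_even1 : ∀ i, slp y (2*i) 1 = 0 := by
    intro i; unfold slp
    rw [show (2*i : ℕ)+1 = 2*i+1 from rfl, hvA_odd1, hvA_even1, sub_self]
  have hslp_odd0 : ∀ i, slp y (2*i+1) 0 = 0 := by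
    intro i; unfold slp
    rw [show (2*i+1 : ℕ)+1 = 2*(i+1) from by ring, hvA_even0, hvA_odd0, sub_self]
  have hslp_odd1 : ∀ i, slp y (2*i+1) 1 = y (i+1) - y i := by
    intro i; unfold slp
    rw [show (2*i+1 : ℕ)+1 = 2*(i+1) from by ring, hvA_even1, hvA_odd1]
  have hvAN : ∀ j : Fin 2, vA y (2*N) j = y N := by
    intro j; unfold vA
    rw [show (2*N+1)/2 = N by omega, show (2*N)/2 = N by omega]
    fin_cases j <;> simp
  have hsum1 : ∑ i ∈ Finset.range N, x (i+1) = y N := rfl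
  have h0 : ∀ j : Fin 2, leadLagPath y 0 j = 0 := by
    intro j
    rw [show (0:ℝ) = ((0:ℕ):ℝ) by norm_num, ll_nat]
    unfold vA
    fin_cases j <;> simp [hy0]
  -- algebraic helper sums
  have halg : ∀ ε : ℝ,
      ∑ i ∈ Finset.range N,
        (x (i+1) * y N - (y (i+1)^2 - y i^2)/2 + ε * x (i+1)^2 / 2)
      = y N ^ 2 / 2 + ε * (∑ i ∈ Finset.range N, x (i+1)^2) / 2 := by
    intro ε
    rw [Finset.sum_add_distrib, Finset.sum_sub_distrib, ← Finset.sum_mul, ← Finset.sum_div,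
      Finset.sum_range_sub (fun i => y i ^ 2), ← Finset.sum_div, ← Finset.mul_sum, hsum1, hy0]
    ring
  have hlvl1 : ∀ j : Fin 2, sigTerm Z 0 (2 * (N:ℝ)) ![j] = y N := by
    intro j
    rw [hcast]
    show sigTerm (leadLagPath y) 0 _ ![j] = y N
    rw [sig_one_s13 (Nat.cast_nonneg _) j, ll_nat, hvAN j, h0 j, sub_zero]
  have hlvl2 : ∀ j0 j1 : Fin 2, sigTerm Z 0 (2 * (N:ℝ)) ![j0, j1]
      = ∑ i ∈ Finset.range N,
          (slp y (2*i) j0 * (y N - vA y (2*i) j1 - slp y (2*i) j1 / 2)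
           + slp y (2*i+1) j0 * (y N - vA y (2*i+1) j1 - slp y (2*i+1) j1 / 2)) := by
    intro j0 j1
    rw [hcast]
    show sigTerm (leadLagPath y) 0 _ ![j0, j1] = _
    rw [sig_two_eval N j0 j1]
    simp only [hvAN j1]
  refine ⟨?_, ?_, ?_, ?_, ?_, ?_⟩
  · rw [hlvl1 0]
  · rw [hlvl1 1]
  · rw [hlvl2 0 0]
    rw [show (∑ i ∈ Finset.range N, x (i + 1)) ^ 2 / 2
        = y N ^ 2 / 2 + (0:ℝ) * (∑ i ∈ Finset.range N, x (i+1)^2) / 2 by rw [hsum1]; ring]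
    rw [← halg 0]
    apply Finset.sum_congr rfl
    intro i _
    simp only [hslp_even0, hslp_even1, hslp_odd0, hslp_odd1, hvA_even0, hvA_even1,
      hvA_odd0, hvA_odd1, hystep]
    ring
  · rw [hlvl2 1 1]
    rw [show (∑ i ∈ Finset.range N, x (i + 1)) ^ 2 / 2
        = y N ^ 2 / 2 + (0:ℝ) * (∑ i ∈ Finset.range N, x (i+1)^2) / 2 by rw [hsum1]; ring]
    rw [← halg 0]
    apply Finset.sum_congr rfl
    intro i _
    simp only [hslp_even0, hslp_even1, hslp_odd0, hslp_odd1, hvA_even0, hvA_even1,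
      hvA_odd0, hvA_odd1, hystep]
    ring
  · rw [hlvl2 0 1]
    rw [show ((∑ i ∈ Finset.range N, x (i + 1)) ^ 2 + ∑ i ∈ Finset.range N, x (i + 1) ^ 2) / 2
        = y N ^ 2 / 2 + (1:ℝ) * (∑ i ∈ Finset.range N, x (i+1)^2) / 2 by rw [hsum1]; ring]
    rw [← halg 1]
    apply Finset.sum_congr rfl
    intro i _
    simp only [hslp_even0, hslp_even1, hslp_odd0, hslp_odd1, hvA_even0, hvA_even1,
      hvA_odd0, hvA_odd1, hystep]
    ring
  · rw [hlvl2 1 0]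
    rw [show ((∑ i ∈ Finset.range N, x (i + 1)) ^ 2 - ∑ i ∈ Finset.range N, x (i + 1) ^ 2) / 2
        = y N ^ 2 / 2 + (-1:ℝ) * (∑ i ∈ Finset.range N, x (i+1)^2) / 2 by rw [hsum1]; ring]
    rw [← halg (-1)]
    apply Finset.sum_congr rfl
    intro i _
    simp only [hslp_even0, hslp_even1, hslp_odd0, hslp_odd1, hvA_even0, hvA_even1,
      hvA_odd0, hvA_odd1, hystep]
    ring
end

section
/- (Sample mean and variance from signature terms) Let N ≥ 1 and x₁, …, x_N ∈ ℝ. Define the cumulative sums x̃₀ = 0 and x̃_i = x₁ + ⋯ + x_i, and let Z : [0, 2N] → ℝ² be the lead-lag path of (x̃₀,…,x̃_N): the piecewise linear path through Z_{2i} = (x̃_i, x̃_i) for 0 ≤ i ≤ N and Z_{2i+1} = (x̃_{i+1}, x̃_i) for 0 ≤ i ≤ N−1, linear on each [m, m+1]. Then the empirical mean and variance of the data are linear functions of the signature terms of Z: Mean(x) = (1/N)·Σ_{i=1}^N x_i = (1/N)·S(Z)^1_{0,2N}, and Var(x) = (1/N)·Σ_{i=1}^N x_i² − ((1/N)·Σ_{i=1}^N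 x_i)² = ((N−1)/N²)·S(Z)^{1,2}_{0,2N} − ((N+1)/N²)·S(Z)^{2,1}_{0,2N}. -/
open MeasureTheory

namespace LLAux

open Set

/-- The `m`-th vertex of the lead-lag path. -/
def vtx (x : ℕ → ℝ) (m : ℕ) : Fin 2 → ℝ := ![x ((m+1)/2), x (m/2)]

/-- Increment of the `j`-th coordinate over `[m, m+1]`. -/
noncomputable def dv (x : ℕ → ℝ) (j : Fin 2) (m : ℕ) : ℝ := vtx x (m+1) j - vtx x m j

lemma hasDerivAt_leadLag (x : ℕ → ℝ) (j : Fin 2) {m : ℕ} {t : ℝ}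
    (ht : t ∈ Ioo (m:ℝ) (m+1)) :
    HasDerivAt (fun s => leadLagPath x s j) (dv x j m) t := by
  have h1 : HasDerivAt (fun s : ℝ => vtx x m j + (s - m) * dv x j m) (dv x j m) t := by
    simpa using (((hasDerivAt_id t).sub_const (m:ℝ)).mul_const (dv x j m)).const_add (vtx x m j)
  apply h1.congr_of_eventuallyEq
  filter_upwards [Ioo_mem_nhds ht.1 ht.2] with s hs
  have hm : ⌊s⌋₊ = m := by
    rw [Nat.floor_eq_iff (le_of_lt (lt_of_le_of_lt (Nat.cast_nonneg m) hs.1))]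
    exact ⟨le_of_lt hs.1, by exact_mod_cast hs.2⟩
  simp only [leadLagPath, hm, vtx, dv, Pi.add_apply, Pi.smul_apply, Pi.sub_apply,
    smul_eq_mul]

lemma deriv_leadLag (x : ℕ → ℝ) (j : Fin 2) {m : ℕ} {t : ℝ}
    (ht : t ∈ Ioo (m:ℝ) (m+1)) :
    deriv (fun s => leadLagPath x s j) t = dv x j m :=
  (hasDerivAt_leadLag x j ht).deriv

lemma integral_piece {h : ℝ → ℝ} {a b c : ℝ} (hab : a ≤ b)
    (hc : ∀ t ∈ Ioo a b, h t = c) :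
    IntegrableOn h (Ioo a b) ∧ ∫ t in Ioo a b, h t = c * (b - a) := by
  have h1 : EqOn h (fun _ => c) (Ioo a b) := fun t ht => hc t ht
  have h2 : IntegrableOn (fun _ : ℝ => c) (Ioo a b) :=
    integrableOn_const measure_Ioo_lt_top.ne
  constructor
  · exact (integrableOn_congr_fun h1 measurableSet_Ioo).2 h2
  · rw [setIntegral_congr_fun measurableSet_Ioo h1]
    simp [Real.volume_Ioo, ENNReal.toReal_ofReal (sub_nonneg.2 hab), mul_comm, hab]

lemma integral_split {h : ℝ → ℝ} {n : ℕ} {b : ℝ} (hnb : (n:ℝ) < b)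
    (h1 : IntegrableOn h (Ioo 0 (n:ℝ))) (h2 : IntegrableOn h (Ioo (n:ℝ) b)) :
    IntegrableOn h (Ioo 0 b) ∧
      ∫ t in Ioo (0:ℝ) b, h t = (∫ t in Ioo (0:ℝ) n, h t) + ∫ t in Ioo (n:ℝ) b, h t := by
  have hu : Ioc (0:ℝ) n ∪ Ioo (n:ℝ) b = Ioo 0 b := by
    rcases Nat.eq_zero_or_pos n with h0 | h0
    · subst h0; simp
    · exact Ioc_union_Ioo_eq_Ioo (by positivity) hnb
  have h1' : IntegrableOn h (Ioc (0:ℝ) n) := by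
    rwa [IntegrableOn, Measure.restrict_congr_set Ioo_ae_eq_Ioc.symm]
  have hdisj : Disjoint (Ioc (0:ℝ) n) (Ioo (n:ℝ) b) := by
    rw [Set.disjoint_left]; rintro t ⟨_, ht2⟩ ⟨ht3, _⟩; exact absurd ht3 (not_lt.2 ht2)
  constructor
  · rw [← hu]; exact h1'.union h2
  · rw [← hu, setIntegral_union hdisj measurableSet_Ioo h1' h2,
      integral_Ioc_eq_integral_Ioo]

lemma integral_Ioo_nat (h : ℝ → ℝ) (n : ℕ)
    (hint : ∀ m < n, IntegrableOn h (Ioo (m:ℝ) (m+1))) :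
    IntegrableOn h (Ioo (0:ℝ) n) ∧
      ∫ t in Ioo (0:ℝ) n, h t = ∑ m ∈ Finset.range n, ∫ t in Ioo (m:ℝ) (m+1), h t := by
  induction n with
  | zero => simp
  | succ n ih =>
    obtain ⟨ih1, ih2⟩ := ih (fun m hm => hint m (Nat.lt_succ_of_lt hm))
    have hlast := hint n (Nat.lt_succ_self n)
    have hcast : ((n+1 : ℕ) : ℝ) = (n:ℝ) + 1 := by push_cast; ring
    have hs := integral_split (h := h) (n := n) (b := (n:ℝ)+1) (by linarith) ih1 hlast
    rw [hcast]
    exact ⟨hs.1, by rw [hs.2, ih2, Finset.sum_range_succ]⟩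

lemma deriv_step (x : ℕ → ℝ) (j : Fin 2) (B : ℕ) :
    IntegrableOn (deriv (fun s => leadLagPath x s j)) (Ioo (0:ℝ) B) ∧
      ∫ t in Ioo (0:ℝ) B, deriv (fun s => leadLagPath x s j) t
        = ∑ m ∈ Finset.range B, dv x j m := by
  have hp : ∀ m : ℕ, IntegrableOn (deriv (fun s => leadLagPath x s j)) (Ioo (m:ℝ) (m+1)) ∧
      ∫ t in Ioo (m:ℝ) (m+1), deriv (fun s => leadLagPath x s j) t = dv x j m := by
    intro m
    have h := integral_piece (h := deriv fun s => leadLagPath x s j) (a := (m:ℝ)) (b := m+1)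
      (by linarith) (fun t ht => deriv_leadLag x j ht)
    exact ⟨h.1, by rw [h.2]; ring⟩
  obtain ⟨h1, h2⟩ := integral_Ioo_nat _ B (fun m _ => (hp m).1)
  exact ⟨h1, by rw [h2]; exact Finset.sum_congr rfl fun m _ => (hp m).2⟩

lemma deriv_partial (x : ℕ → ℝ) (j : Fin 2) (n : ℕ) {t0 : ℝ} (ht0 : t0 ∈ Ioo (n:ℝ) (n+1)) :
    ∫ t in Ioo (0:ℝ) t0, deriv (fun s => leadLagPath x s j) t
      = (∑ m ∈ Finset.range n, dv x j m) + dv x j n * (t0 - n) := by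
  have hpiece := integral_piece (h := deriv fun s => leadLagPath x s j)
    (a := (n:ℝ)) (b := t0) (le_of_lt ht0.1)
    (fun t ht => deriv_leadLag x j ⟨ht.1, lt_trans ht.2 ht0.2⟩)
  have hsplit := integral_split (h := deriv fun s => leadLagPath x s j) (n := n) (b := t0)
    ht0.1 (deriv_step x j n).1 hpiece.1
  rw [hsplit.2, (deriv_step x j n).2, hpiece.2]

lemma sig_single (x : ℕ → ℝ) (B : ℕ) (j : Fin 2) :
    sigTerm (leadLagPath x) 0 (B:ℝ) ![j] = ∑ m ∈ Finset.range B, dv x j m := by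
  unfold sigTerm
  change ∫ t in {t : Fin 1 → ℝ | StrictMono t ∧ ∀ i, t i ∈ Set.Ioo 0 (B:ℝ)},
    ∏ i, deriv (fun s => leadLagPath x s (![j] i)) (t i) = _
  erw [← ((volume_preserving_funUnique (Fin 1) ℝ).symm _).setIntegral_preimage_emb
    (MeasurableEquiv.measurableEmbedding _)]
  have hset : (MeasurableEquiv.funUnique (Fin 1) ℝ).symm ⁻¹'
      {t : Fin 1 → ℝ | StrictMono t ∧ ∀ i, t i ∈ Set.Ioo 0 (B:ℝ)} = Ioo (0:ℝ) B := by
    ext r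
    simp [MeasurableEquiv.funUnique, Subsingleton.strictMono]
  rw [hset, ← (deriv_step x j B).2]
  apply setIntegral_congr_fun measurableSet_Ioo
  intro r _
  simp [MeasurableEquiv.funUnique]

lemma affine_integral (a dj dk : ℝ) (n : ℕ) :
    IntegrableOn (fun t : ℝ => (a + dj * (t - n)) * dk) (Ioo (n:ℝ) (n+1)) ∧
      ∫ t in Ioo (n:ℝ) (n+1), (a + dj * (t - n)) * dk = dk * (a + dj / 2) := by
  have hcont : Continuous fun t : ℝ => (a + dj * (t - n)) * dk := by continuity
  constructor
  · exact hcont.integrableOn_Icc.mono_set Ioo_subset_Icc_self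
  · rw [← integral_Ioc_eq_integral_Ioo,
      ← intervalIntegral.integral_of_le (by linarith : (n:ℝ) ≤ n+1)]
    have hfun : (fun t : ℝ => (a + dj * (t - n)) * dk)
        = fun t : ℝ => (a * dk - dj * dk * n) + dj * dk * t := by
      funext t; ring
    rw [hfun, intervalIntegral.integral_add intervalIntegrable_const
      (intervalIntegral.intervalIntegrable_id.const_mul _),
      intervalIntegral.integral_const_mul, intervalIntegral.integral_const,
      integral_id, smul_eq_mul]
    ring

lemma sig_double (x : ℕ → ℝ) (B : ℕ) (j k : Fin 2) :
    sigTerm (leadLagPath x) 0 (B:ℝ) ![j, k] =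
      ∑ n ∈ Finset.range B,
        dv x k n * ((∑ m ∈ Finset.range n, dv x j m) + dv x j n / 2) := by
  set fj : ℝ → ℝ := deriv (fun s => leadLagPath x s j) with hfj
  set fk : ℝ → ℝ := deriv (fun s => leadLagPath x s k) with hfk
  set F : ℝ × ℝ → ℝ := fun p => fj p.1 * fk p.2 with hF
  set T : Set (ℝ × ℝ) := {p | p.1 < p.2 ∧ p.1 ∈ Ioo (0:ℝ) B ∧ p.2 ∈ Ioo (0:ℝ) B} with hT
  have hTm : MeasurableSet T := by
    have : T = {p : ℝ × ℝ | p.1 < p.2} ∩ (Ioo (0:ℝ) B ×ˢ Ioo (0:ℝ) B) := by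
      ext p; simp only [hT, Set.mem_setOf_eq, Set.mem_inter_iff, Set.mem_prod]
    rw [this]
    exact (measurableSet_lt measurable_fst measurable_snd).inter
      (measurableSet_Ioo.prod measurableSet_Ioo)
  have step1 : sigTerm (leadLagPath x) 0 (B:ℝ) ![j, k] = ∫ p in T, F p := by
    unfold sigTerm
    rw [← ((volume_preserving_finTwoArrow ℝ).symm _).setIntegral_preimage_emb
      (MeasurableEquiv.measurableEmbedding _)]
    have hset : (MeasurableEquiv.finTwoArrow (α := ℝ)).symm ⁻¹'
        {t : Fin 2 → ℝ | StrictMono t ∧ ∀ i, t i ∈ Set.Ioo 0 (B:ℝ)} = T := by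
      ext p
      simp [MeasurableEquiv.finTwoArrow, Fin.strictMono_iff_lt_succ, Fin.forall_fin_one,
        Fin.forall_fin_two, hT]
    rw [hset]
    apply setIntegral_congr_fun hTm
    intro p _
    simp [MeasurableEquiv.finTwoArrow, Fin.prod_univ_two, hF, hfj, hfk]
  have hIj : IntegrableOn fj (Ioo (0:ℝ) B) := (deriv_step x j B).1
  have hIk : IntegrableOn fk (Ioo (0:ℝ) B) := (deriv_step x k B).1
  have hIF2 : IntegrableOn F T (volume.prod volume) := by
    apply IntegrableOn.mono_set (t := Ioo (0:ℝ) B ×ˢ Ioo (0:ℝ) B)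
    · rw [IntegrableOn, ← Measure.prod_restrict]
      exact hIj.mul_prod hIk
    · rintro p ⟨_, h1, h2⟩; exact ⟨h1, h2⟩
  have hInd : Integrable (T.indicator F) (volume.prod volume) :=
    hIF2.integrable_indicator hTm
  have step2 : (∫ p in T, F p)
      = ∫ t in Ioo (0:ℝ) B, (∫ s in Ioo (0:ℝ) t, fj s) * fk t := by
    rw [Measure.volume_eq_prod, ← integral_indicator hTm,
      integral_prod_symm _ hInd, ← integral_indicator (measurableSet_Ioo (a := (0:ℝ)) (b := (B:ℝ)))]
    congr 1
    funext t
    by_cases ht : t ∈ Ioo (0:ℝ) B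
    · have heq : (fun s => T.indicator F (s, t))
          = (Ioo (0:ℝ) t).indicator (fun s => fj s * fk t) := by
        funext s
        by_cases hs : s ∈ Ioo (0:ℝ) t
        · rw [Set.indicator_of_mem hs, Set.indicator_of_mem]
          exact ⟨hs.2, ⟨hs.1, lt_trans hs.2 ht.2⟩, ht⟩
        · rw [Set.indicator_of_notMem hs, Set.indicator_of_notMem]
          intro hmem; exact hs ⟨hmem.2.1.1, hmem.1⟩
      rw [heq, integral_indicator measurableSet_Ioo, Set.indicator_of_mem ht,
        integral_mul_const]
    · rw [Set.indicator_of_notMem ht]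
      have heq : (fun s => T.indicator F (s, t)) = fun _ => (0:ℝ) := by
        funext s
        rw [Set.indicator_of_notMem]
        intro hmem; exact ht hmem.2.2
      rw [heq]; exact integral_zero _ _
  have hp : ∀ n : ℕ,
      IntegrableOn (fun t => (∫ s in Ioo (0:ℝ) t, fj s) * fk t) (Ioo (n:ℝ) (n+1)) ∧
        ∫ t in Ioo (n:ℝ) (n+1), (∫ s in Ioo (0:ℝ) t, fj s) * fk t
          = dv x k n * ((∑ m ∈ Finset.range n, dv x j m) + dv x j n / 2) := by
    intro n
    have haff := affine_integral (∑ m ∈ Finset.range n, dv x j m) (dv x j n) (dv x k n) n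
    have heq : EqOn (fun t => (∫ s in Ioo (0:ℝ) t, fj s) * fk t)
        (fun t : ℝ => ((∑ m ∈ Finset.range n, dv x j m) + dv x j n * (t - n)) * dv x k n)
        (Ioo (n:ℝ) (n+1)) := by
      intro t ht
      simp only
      rw [deriv_partial x j n ht, hfk, deriv_leadLag x k ht]
    constructor
    · exact (integrableOn_congr_fun heq measurableSet_Ioo).2 haff.1
    · rw [setIntegral_congr_fun measurableSet_Ioo heq, haff.2]
  rw [step1, step2]
  obtain ⟨h1, h2⟩ := integral_Ioo_nat _ B (fun n _ => (hp n).1)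
  rw [h2]
  exact Finset.sum_congr rfl fun n _ => (hp n).2

lemma sum_range_two_mul (c : ℕ → ℝ) (n : ℕ) :
    ∑ m ∈ Finset.range (2*n), c m = ∑ i ∈ Finset.range n, (c (2*i) + c (2*i+1)) := by
  induction n with
  | zero => simp
  | succ n ih =>
    have h2 : 2*(n+1) = (2*n) + 1 + 1 := by ring
    rw [h2, Finset.sum_range_succ, Finset.sum_range_succ, ih, Finset.sum_range_succ]
    ring

lemma sum_dv (x : ℕ → ℝ) (j : Fin 2) (n : ℕ) :
    ∑ m ∈ Finset.range n, dv x j m = vtx x n j - vtx x 0 j :=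
  Finset.sum_range_sub (fun m => vtx x m j) n

lemma sq_sum (a : ℕ → ℝ) (n : ℕ) :
    (∑ i ∈ Finset.range n, a i)^2
      = ∑ i ∈ Finset.range n, (a i)^2
        + 2 * ∑ i ∈ Finset.range n, a i * ∑ j ∈ Finset.range i, a j := by
  induction n with
  | zero => simp
  | succ n ih =>
    rw [Finset.sum_range_succ, Finset.sum_range_succ (fun i => (a i)^2),
      Finset.sum_range_succ (fun i => a i * ∑ j ∈ Finset.range i, a j)]
    linear_combination ih

end LLAux

/-- Sample mean and variance from signature terms: with `Z` the lead-lag path of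
the cumulative sums `x̃₀ = 0, x̃_i = x₁ + ⋯ + x_i`, the empirical mean of the
data is `(1/N)·S(Z)^1` and the empirical variance is
`((N−1)/N²)·S(Z)^{1,2} − ((N+1)/N²)·S(Z)^{2,1}`. -/
theorem mean_variance_from_signature (N : ℕ) (hN : 1 ≤ N) (x : ℕ → ℝ) :
    let Z := leadLagPath fun i => ∑ j ∈ Finset.range i, x (j + 1)
    (1 / (N : ℝ)) * ∑ i ∈ Finset.range N, x (i + 1)
        = (1 / (N : ℝ)) * sigTerm Z 0 (2 * N) ![0] ∧
    (1 / (N : ℝ)) * ∑ i ∈ Finset.range N, x (i + 1) ^ 2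
        - ((1 / (N : ℝ)) * ∑ i ∈ Finset.range N, x (i + 1)) ^ 2
      = (((N : ℝ) - 1) / (N : ℝ) ^ 2) * sigTerm Z 0 (2 * N) ![0, 1]
        - (((N : ℝ) + 1) / (N : ℝ) ^ 2) * sigTerm Z 0 (2 * N) ![1, 0] := by
  classical
  intro Z
  have hZ : Z = leadLagPath fun i => ∑ j ∈ Finset.range i, x (j + 1) := rfl
  set cs : ℕ → ℝ := fun i => ∑ j ∈ Finset.range i, x (j + 1) with hcs
  have hcast : (2 * (N:ℝ)) = (((2*N : ℕ)) : ℝ) := by push_cast; ring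
  -- dv computations
  have dv0_even : ∀ i : ℕ, LLAux.dv cs 0 (2*i) = x (i+1) := by
    intro i
    have e1 : (2*i+1+1)/2 = i+1 := by omega
    have e2 : (2*i+1)/2 = i := by omega
    simp only [LLAux.dv, LLAux.vtx, Matrix.cons_val_zero, e1, e2, hcs]
    rw [Finset.sum_range_succ]; ring
  have dv0_odd : ∀ i : ℕ, LLAux.dv cs 0 (2*i+1) = 0 := by
    intro i
    have e1 : (2*i+1+1+1)/2 = i+1 := by omega
    have e2 : (2*i+1+1)/2 = i+1 := by omega
    simp only [LLAux.dv, LLAux.vtx, Matrix.cons_val_zero, e1, e2, sub_self]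
  have dv1_even : ∀ i : ℕ, LLAux.dv cs 1 (2*i) = 0 := by
    intro i
    have e1 : (2*i+1)/2 = i := by omega
    have e2 : (2*i)/2 = i := by omega
    simp only [LLAux.dv, LLAux.vtx, Matrix.cons_val_one, Matrix.head_cons, e1, e2, sub_self]
  have dv1_odd : ∀ i : ℕ, LLAux.dv cs 1 (2*i+1) = x (i+1) := by
    intro i
    have e1 : (2*i+1+1)/2 = i+1 := by omega
    have e2 : (2*i+1)/2 = i := by omega
    simp only [LLAux.dv, LLAux.vtx, Matrix.cons_val_one, Matrix.head_cons, Matrix.cons_val_zero, e1, e2, hcs]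
    rw [Finset.sum_range_succ]; ring
  -- partial sums
  have hvtx0 : ∀ j : Fin 2, LLAux.vtx cs 0 j = 0 := by
    intro j
    fin_cases j <;> simp [LLAux.vtx, hcs]
  have P0 : ∀ n : ℕ, ∑ m ∈ Finset.range n, LLAux.dv cs 0 m = cs ((n+1)/2) := by
    intro n
    rw [LLAux.sum_dv, hvtx0]
    simp [LLAux.vtx]
  have P1 : ∀ n : ℕ, ∑ m ∈ Finset.range n, LLAux.dv cs 1 m = cs (n/2) := by
    intro n
    rw [LLAux.sum_dv, hvtx0]
    simp [LLAux.vtx]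
  -- the three signature terms
  have h1 : sigTerm Z 0 (2 * (N:ℝ)) ![0] = ∑ i ∈ Finset.range N, x (i+1) := by
    rw [hZ, hcast, LLAux.sig_single, LLAux.sum_range_two_mul]
    refine Finset.sum_congr rfl fun i _ => ?_
    rw [dv0_even, dv0_odd, add_zero]
  have h12 : sigTerm Z 0 (2 * (N:ℝ)) ![0, 1] = ∑ i ∈ Finset.range N, x (i+1) * cs (i+1) := by
    rw [hZ, hcast, LLAux.sig_double, LLAux.sum_range_two_mul]
    refine Finset.sum_congr rfl fun i _ => ?_
    rw [dv1_even, dv1_odd, dv0_odd]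
    simp only [P0]
    have e1 : (2*i+1+1)/2 = i+1 := by omega
    rw [e1]; ring
  have h21 : sigTerm Z 0 (2 * (N:ℝ)) ![1, 0] = ∑ i ∈ Finset.range N, x (i+1) * cs i := by
    rw [hZ, hcast, LLAux.sig_double, LLAux.sum_range_two_mul]
    refine Finset.sum_congr rfl fun i _ => ?_
    rw [dv0_even, dv0_odd, dv1_even, dv1_odd]
    simp only [P1]
    have e1 : (2*i)/2 = i := by omega
    rw [e1]; ring
  have hN0 : (N:ℝ) ≠ 0 := by positivity
  constructor
  · rw [h1]
  · rw [h12, h21]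
    have hsplit : ∑ i ∈ Finset.range N, x (i+1) * cs (i+1)
        = ∑ i ∈ Finset.range N, x (i+1) * cs i + ∑ i ∈ Finset.range N, x (i+1)^2 := by
      rw [← Finset.sum_add_distrib]
      refine Finset.sum_congr rfl fun i _ => ?_
      rw [hcs]
      simp only
      rw [Finset.sum_range_succ]; ring
    have hsq : (∑ i ∈ Finset.range N, x (i+1))^2
        = ∑ i ∈ Finset.range N, (x (i+1))^2
          + 2 * ∑ i ∈ Finset.range N, x (i+1) * cs i := by
      have := LLAux.sq_sum (fun i => x (i+1)) N
      simpa [hcs] using this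
    rw [hsplit, mul_pow, hsq]
    field_simp
    ring
end
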